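/- arXiv:math/0401406 — 6 statements merged into one kernel-verified Lean document; each statement's English description precedes it below -/
import Mathlib

section
/- The sum of the series ∑_{n=1}^∞ (1/n) ∑_{k=0}^n (−1)^{k+1} · binom(n,k) · ln(k+1) equals 1. -/
open Finset Filter Real



noncomputable def cfun (m : ℕ) (x : ℝ) : ℝ :=
  m.factorial * x^m / ∏ j ∈ Finset.range (m+1), (1 + j*x)

lemma harm (N : ℕ) : Real.log ((N:ℝ)+1) ≤ ∑ j ∈ range N, 1/((j:ℝ)+1) := by
  have tele := Finset.sum_range_sub (fun j => Real.log ((j:ℝ)+1)) N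
  have hb : ∀ j ∈ range N,
      Real.log (((j+1:ℕ):ℝ)+1) - Real.log (((j:ℕ):ℝ)+1) ≤ 1/((j:ℝ)+1) := by
    intro j _
    have hj : (0:ℝ) < (j:ℝ)+1 := by positivity
    push_cast
    rw [← Real.log_div (by positivity) (ne_of_gt hj)]
    have h2 := Real.log_le_sub_one_of_pos (show (0:ℝ) < ((j:ℝ)+1+1)/((j:ℝ)+1) by positivity)
    have e : ((j:ℝ)+1+1)/((j:ℝ)+1) - 1 = 1/((j:ℝ)+1) := by field_simp; ring
    linarith
  have := Finset.sum_le_sum hb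
  rw [tele] at this
  simp only [Nat.cast_zero, zero_add, Real.log_one, sub_zero] at this
  exact this

lemma cfun_repr (N : ℕ) (x : ℝ) :
    cfun N x = ∏ j ∈ range N, ((((j:ℝ)+1)*x)/(1+((j:ℝ)+1)*x)) := by
  unfold cfun
  have h1 : (N.factorial : ℝ) * x^N = ∏ j ∈ range N, (((j:ℝ)+1)*x) := by
    rw [Finset.prod_mul_distrib, Finset.prod_const, Finset.card_range]
    congr 1
    have hh : ((N.factorial : ℕ) : ℝ) = ((∏ j ∈ range N, (j+1) : ℕ) : ℝ) := by
      rw [Finset.prod_range_add_one_eq_factorial]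
    rw [hh]
    push_cast
    rfl
  have h2 : ∏ j ∈ range (N+1), ((1:ℝ)+(j:ℝ)*x) = ∏ j ∈ range N, (1+((j:ℝ)+1)*x) := by
    rw [Finset.prod_range_succ' (fun j => (1:ℝ)+(j:ℝ)*x)]
    push_cast
    simp
  rw [h1, h2, ← Finset.prod_div_distrib]

lemma cfun_nonneg (N : ℕ) (x : ℝ) (hx : x ∈ Set.Icc (0:ℝ) 1) : 0 ≤ cfun N x := by
  rw [cfun_repr]
  apply Finset.prod_nonneg
  intro j _
  have h0 := hx.1
  have hd : (0:ℝ) < 1+((j:ℝ)+1)*x := by nlinarith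
  exact div_nonneg (mul_nonneg (by positivity) h0) hd.le

lemma cfun_bound (N : ℕ) (x : ℝ) (hx : x ∈ Set.Icc (0:ℝ) 1) :
    cfun N x ≤ Real.exp (-(1/2) * Real.log ((N:ℝ)+1)) := by
  have h0 := hx.1
  have h1 := hx.2
  rw [cfun_repr]
  calc ∏ j ∈ range N, (((j:ℝ)+1)*x/(1+((j:ℝ)+1)*x))
      ≤ ∏ j ∈ range N, Real.exp (-(1/(2*((j:ℝ)+1)))) := by
        apply Finset.prod_le_prod
        · intro j _
          have hd : (0:ℝ) < 1+((j:ℝ)+1)*x := by nlinarith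
          exact div_nonneg (mul_nonneg (by positivity) h0) hd.le
        · intro j _
          have hd : (0:ℝ) < 1+((j:ℝ)+1)*x := by nlinarith
          have e1 : ((j:ℝ)+1)*x/(1+((j:ℝ)+1)*x) = 1 - 1/(1+((j:ℝ)+1)*x) := by
            field_simp
            ring
          rw [e1]
          have e2 : 1 - 1/(1+((j:ℝ)+1)*x) ≤ Real.exp (-(1/(1+((j:ℝ)+1)*x))) := by
            have := Real.add_one_le_exp (-(1/(1+((j:ℝ)+1)*x)))
            linarith
          refine e2.trans (Real.exp_le_exp.mpr ?_)
          have hle : 1+((j:ℝ)+1)*x ≤ 2*((j:ℝ)+1) := by nlinarith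
          have h2 : 1/(2*((j:ℝ)+1)) ≤ 1/(1+((j:ℝ)+1)*x) :=
            one_div_le_one_div_of_le hd hle
          linarith
    _ = Real.exp (∑ j ∈ range N, -(1/(2*((j:ℝ)+1)))) := (Real.exp_sum _ _).symm
    _ ≤ Real.exp (-(1/2) * Real.log ((N:ℝ)+1)) := by
        apply Real.exp_le_exp.mpr
        have hm := harm N
        have e : ∑ j ∈ range N, -(1/(2*((j:ℝ)+1))) = -(1/2) * ∑ j ∈ range N, 1/((j:ℝ)+1) := by
          rw [Finset.mul_sum]
          exact Finset.sum_congr rfl (fun j _ => by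
            have hj : ((j:ℝ)+1) ≠ 0 := by positivity
            field_simp)
        rw [e]
        linarith

lemma cfun_intg (N : ℕ) : IntervalIntegrable (cfun N) MeasureTheory.volume 0 1 := by
  apply ContinuousOn.intervalIntegrable
  unfold cfun
  apply ContinuousOn.div
  · fun_prop
  · exact (continuous_finset_prod _ (fun j _ => by fun_prop)).continuousOn
  · intro x hx
    rw [Set.uIcc_of_le (by norm_num : (0:ℝ) ≤ 1)] at hx
    have h0 := hx.1
    refine ne_of_gt (Finset.prod_pos (fun j _ => ?_))
    have hj : (0:ℝ) ≤ (j:ℝ) := Nat.cast_nonneg j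
    nlinarith



lemma lemA (N : ℕ) : ∀ a x : ℝ, 0 < a → 0 ≤ x →
    ∑ k ∈ range (N+1), (-1:ℝ)^k * (N.choose k) / (a + k*x)
      = N.factorial * x^N / ∏ j ∈ range (N+1), (a + j*x) := by
  induction N with
  | zero => intro a x ha hx; simp
  | succ N IH =>
    intro a x ha hx
    have hpos : ∀ b : ℝ, 0 < b → ∀ j : ℕ, (0:ℝ) < b + j*x := by
      intro b hb j; positivity
    have key : ∑ k ∈ range (N+2), (-1:ℝ)^k * ((N+1).choose k) / (a + k*x)
        = (∑ k ∈ range (N+1), (-1:ℝ)^k * (N.choose k) / (a + k*x))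
          - ∑ k ∈ range (N+1), (-1:ℝ)^k * (N.choose k) / ((a+x) + k*x) := by
      rw [Finset.sum_range_succ' (fun k => (-1:ℝ)^k * ((N+1).choose k) / (a + k*x))]
      have e1 : ∀ k ∈ range (N+1),
          (-1:ℝ)^(k+1) * ((N+1).choose (k+1)) / (a + (k+1:ℕ)*x)
          = (-1:ℝ)^(k+1) * (N.choose (k+1)) / (a + (k+1:ℕ)*x)
            - (-1:ℝ)^k * (N.choose k) / ((a+x) + k*x) := by
        intro k _
        rw [Nat.choose_succ_succ]
        push_cast
        have : a + ((k:ℝ)+1)*x = (a+x) + k*x := by ring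
        rw [this]
        ring
      rw [Finset.sum_congr rfl e1, Finset.sum_sub_distrib]
      have e2 : (∑ k ∈ range (N+1), (-1:ℝ)^(k+1) * (N.choose (k+1)) / (a + (k+1:ℕ)*x))
            + (-1:ℝ)^0 * ((N+1).choose 0) / (a + (0:ℕ)*x)
          = ∑ k ∈ range (N+1), (-1:ℝ)^k * (N.choose k) / (a + k*x) := by
        have := Finset.sum_range_succ' (fun k => (-1:ℝ)^k * (N.choose k) / (a + k*x)) (N+1)
        rw [Finset.sum_range_succ (fun k => (-1:ℝ)^k * (N.choose k) / (a + k*x)) (N+1)] at this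
        simp only [Nat.choose_succ_self, Nat.cast_zero, mul_zero, zero_div, zero_mul,
          mul_zero] at this ⊢
        simpa using this.symm
      linarith [e2]
    rw [key, IH a x ha hx, IH (a+x) x (by linarith) hx]
    have h1 : ∏ j ∈ range (N+2), (a + j*x) = (∏ j ∈ range (N+1), (a + j*x)) * (a+(N+1)*x) := by
      rw [Finset.prod_range_succ]; push_cast; ring
    have h2 : ∏ j ∈ range (N+2), (a + j*x) = a * ∏ j ∈ range (N+1), ((a+x) + j*x) := by
      rw [Finset.prod_range_succ' (fun j => a + j*x)]
      have : ∏ j ∈ range (N+1), (a + ((j:ℕ)+1:ℕ)*x) = ∏ j ∈ range (N+1), ((a+x) + j*x) :=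
        Finset.prod_congr rfl (fun j _ => by push_cast; ring)
      rw [this]; push_cast; ring
    have hP : (0:ℝ) < ∏ j ∈ range (N+1), (a + j*x) :=
      Finset.prod_pos (fun j _ => hpos a ha j)
    have hQ : (0:ℝ) < ∏ j ∈ range (N+1), ((a+x) + j*x) :=
      Finset.prod_pos (fun j _ => hpos (a+x) (by linarith) j)
    have hR : (0:ℝ) < a+(N+1)*x := by positivity
    rw [h1]
    have hfac : ((N+1).factorial : ℝ) = (N+1) * N.factorial := by
      rw [Nat.factorial_succ]; push_cast; ring
    have h2' : (∏ j ∈ range (N+1), (a + j*x)) * (a+(N+1:ℝ)*x) = a * ∏ j ∈ range (N+1), ((a+x) + j*x) := by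
      rw [← h1, h2]
    rw [div_sub_div _ _ hP.ne' hQ.ne', div_eq_div_iff (mul_pos hP hQ).ne' (mul_pos hP hR).ne', hfac]
    linear_combination (-(N.factorial:ℝ) * x^N * ∏ j ∈ range (N+1), (a + j*x)) * h2'




lemma alt_zero (n : ℕ) (hn : n ≠ 0) :
    ∑ k ∈ range (n+1), (-1:ℝ)^(k+1) * (n.choose k) = 0 := by
  have h := Int.alternating_sum_range_choose (n := n)
  rw [if_neg hn] at h
  have h2 : ∑ k ∈ range (n+1), (-1:ℝ)^k * (n.choose k) = 0 := by
    have h3 : ((∑ k ∈ range (n+1), (-1:ℤ)^k * (n.choose k) : ℤ) : ℝ) = 0 := by rw [h]; norm_num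
    push_cast at h3
    exact h3
  calc ∑ k ∈ range (n+1), (-1:ℝ)^(k+1) * (n.choose k)
      = -∑ k ∈ range (n+1), (-1:ℝ)^k * (n.choose k) := by
        rw [← Finset.sum_neg_distrib]; exact Finset.sum_congr rfl (fun k _ => by ring)
    _ = 0 := by rw [h2, neg_zero]

lemma lemB (i : ℕ) (x : ℝ) (hx : 0 < x) :
    (1/((i:ℝ)+1)) * ∑ k ∈ range (i+2), (-1:ℝ)^(k+1) * (((i+1).choose k : ℕ) : ℝ) * (k/(1+k*x))
      = cfun i x - cfun (i+1) x := by
  have h0 : ∀ k : ℕ, (0:ℝ) < 1 + k*x := fun k => by positivity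
  have e1 : ∀ k ∈ range (i+2), (-1:ℝ)^(k+1) * (((i+1).choose k : ℕ) : ℝ) * (k/(1+k*x))
      = (1/x)*((-1:ℝ)^(k+1)*(((i+1).choose k : ℕ) : ℝ))
        + (1/x)*((-1:ℝ)^k*(((i+1).choose k : ℕ) : ℝ)/(1+k*x)) := by
    intro k _
    have := h0 k
    field_simp
    ring
  rw [Finset.sum_congr rfl e1, Finset.sum_add_distrib, ← Finset.mul_sum, ← Finset.mul_sum,
    alt_zero (i+1) (Nat.succ_ne_zero i), mul_zero, zero_add]
  have hA : ∑ k ∈ range (i+2), (-1:ℝ)^k*(((i+1).choose k : ℕ) : ℝ)/(1+k*x)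
      = (i+1).factorial * x^(i+1) / ∏ j ∈ range (i+2), ((1:ℝ) + j*x) := by
    have := lemA (i+1) 1 x one_pos hx.le
    simpa using this
  have e2 : ∀ k ∈ range (i+2), (-1:ℝ)^k*(((i+1).choose k : ℕ) : ℝ)/(1+k*x)
      = (-1:ℝ)^k*(((i+1).choose k : ℕ) : ℝ)/(1+k*x) := fun k _ => rfl
  rw [show (∑ k ∈ range (i+2), (-1:ℝ)^k*(((i+1).choose k : ℕ) : ℝ)/(1+(k:ℝ)*x)) =
      (i+1).factorial * x^(i+1) / ∏ j ∈ range (i+2), ((1:ℝ) + j*x) from hA]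
  unfold cfun
  have hQ : (0:ℝ) < ∏ j ∈ range (i+2), (1 + j*x) := Finset.prod_pos (fun j _ => h0 j)
  have hP : (0:ℝ) < ∏ j ∈ range (i+1), (1 + j*x) := Finset.prod_pos (fun j _ => h0 j)
  have hsucc : ∏ j ∈ range (i+2), ((1:ℝ) + j*x) = (∏ j ∈ range (i+1), ((1:ℝ) + j*x)) * (1+(i+1)*x) := by
    rw [Finset.prod_range_succ]; push_cast; ring
  rw [hsucc]
  have hfac : (((i+1).factorial : ℕ) : ℝ) = ((i:ℝ)+1) * (i.factorial : ℝ) := by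
    rw [Nat.factorial_succ]; push_cast; ring
  rw [hfac]
  have hi : ((i:ℝ)+1) ≠ 0 := by positivity
  field_simp
  ring




lemma lemG (N : ℕ) (x : ℝ) (hx : 0 < x) :
    ∑ n ∈ Icc 1 N, (1/(n:ℝ)) * ∑ k ∈ range (n+1),
        (-1:ℝ)^(k+1) * (n.choose k : ℝ) * ((k:ℝ)/(1+k*x))
      = 1 - cfun N x := by
  rw [← Finset.Ico_add_one_right_eq_Icc, Finset.sum_Ico_eq_sum_range]
  simp only [Nat.add_sub_cancel]
  have e : ∀ i ∈ range N, (1/((1+i:ℕ):ℝ)) * ∑ k ∈ range ((1+i)+1),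
        (-1:ℝ)^(k+1) * ((1+i).choose k : ℝ) * ((k:ℝ)/(1+k*x))
      = cfun i x - cfun (i+1) x := by
    intro i _
    rw [Nat.add_comm 1 i]
    have := lemB i x hx
    push_cast at this ⊢
    convert this using 2
  rw [Finset.sum_congr rfl e, Finset.sum_range_sub' (fun i => cfun i x) N]
  congr 1
  unfold cfun
  norm_num

lemma intC (k : ℕ) : ∫ x in (0:ℝ)..1, ((k:ℝ)/(1+k*x)) = Real.log ((k:ℝ)+1) := by
  have hne : ∀ x ∈ Set.uIcc (0:ℝ) 1, (1:ℝ) + k*x ≠ 0 := by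
    intro x hx
    rw [Set.uIcc_of_le (by norm_num : (0:ℝ) ≤ 1)] at hx
    have : (0:ℝ) ≤ x := hx.1
    positivity
  have hcont : ContinuousOn (fun x : ℝ => (k:ℝ)/(1+k*x)) (Set.uIcc 0 1) :=
    ContinuousOn.div continuousOn_const (by fun_prop) hne
  have hder : ∀ x ∈ Set.uIcc (0:ℝ) 1,
      HasDerivAt (fun y : ℝ => Real.log (1+k*y)) ((k:ℝ)/(1+k*x)) x := by
    intro x hx
    have h1 : HasDerivAt (fun y : ℝ => 1 + (k:ℝ)*y) (k:ℝ) x := by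
      simpa using ((hasDerivAt_id x).const_mul (k:ℝ)).const_add (1:ℝ)
    simpa using h1.log (hne x hx)
  rw [intervalIntegral.integral_eq_sub_of_hasDerivAt hder (hcont.intervalIntegrable)]
  norm_num
  rw [add_comm]


/-- ∑_{n=1}^∞ (1/n) ∑_{k=0}^n (−1)^{k+1} C(n,k) ln(k+1) = 1. -/
theorem stmt_12 :
    Tendsto (fun N : ℕ => ∑ n ∈ Finset.Icc 1 N,
        (1 / n : ℝ) * ∑ k ∈ Finset.range (n + 1),
          (-1 : ℝ) ^ (k + 1) * (n.choose k : ℝ) * Real.log (k + 1))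
      atTop (nhds 1) := by
  have hne : ∀ k : ℕ, ∀ x ∈ Set.uIcc (0:ℝ) 1, (1:ℝ) + k*x ≠ 0 := by
    intro k x hx
    rw [Set.uIcc_of_le (by norm_num : (0:ℝ) ≤ 1)] at hx
    have h0 := hx.1
    have hk : (0:ℝ) ≤ (k:ℝ) := Nat.cast_nonneg k
    nlinarith
  have hintk : ∀ k : ℕ, IntervalIntegrable (fun x : ℝ => (k:ℝ)/(1+k*x))
      MeasureTheory.volume 0 1 := by
    intro k
    exact (ContinuousOn.div continuousOn_const (by fun_prop) (hne k)).intervalIntegrable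
  have hintnk : ∀ n : ℕ, IntervalIntegrable
      (fun x : ℝ => (1/(n:ℝ)) * ∑ k ∈ Finset.range (n+1),
        (-1:ℝ)^(k+1) * (n.choose k : ℝ) * ((k:ℝ)/(1+k*x))) MeasureTheory.volume 0 1 := by
    intro n
    apply ContinuousOn.intervalIntegrable
    apply ContinuousOn.mul continuousOn_const
    apply continuousOn_finset_sum
    intro k _
    exact ContinuousOn.mul continuousOn_const
      (ContinuousOn.div continuousOn_const (by fun_prop) (hne k))
  have key : ∀ N : ℕ, (∑ n ∈ Finset.Icc 1 N,
        (1 / n : ℝ) * ∑ k ∈ Finset.range (n + 1),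
          (-1 : ℝ) ^ (k + 1) * (n.choose k : ℝ) * Real.log (k + 1))
      = 1 - ∫ x in (0:ℝ)..1, cfun N x := by
    intro N
    have step1 : ∀ n ∈ Finset.Icc 1 N,
        (1 / n : ℝ) * ∑ k ∈ Finset.range (n + 1),
          (-1 : ℝ) ^ (k + 1) * (n.choose k : ℝ) * Real.log (k + 1)
        = ∫ x in (0:ℝ)..1, (1/(n:ℝ)) * ∑ k ∈ Finset.range (n+1),
            (-1:ℝ)^(k+1) * (n.choose k : ℝ) * ((k:ℝ)/(1+k*x)) := by
      intro n _
      rw [intervalIntegral.integral_const_mul]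
      congr 1
      have hint2 : ∀ k ∈ Finset.range (n+1), IntervalIntegrable
          (fun x : ℝ => (-1:ℝ)^(k+1) * (n.choose k : ℝ) * ((k:ℝ)/(1+k*x)))
          MeasureTheory.volume 0 1 := by
        intro k _
        exact (ContinuousOn.mul continuousOn_const
          (ContinuousOn.div continuousOn_const (by fun_prop) (hne k))).intervalIntegrable
      rw [intervalIntegral.integral_finset_sum hint2]
      refine Finset.sum_congr rfl fun k _ => ?_
      simp only [mul_assoc]
      rw [intervalIntegral.integral_const_mul, intervalIntegral.integral_const_mul, intC k]
    rw [Finset.sum_congr rfl step1,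
      ← intervalIntegral.integral_finset_sum (fun n _ => hintnk n)]
    have congrae : (∫ x in (0:ℝ)..1, ∑ n ∈ Finset.Icc 1 N, (1/(n:ℝ)) *
          ∑ k ∈ Finset.range (n+1), (-1:ℝ)^(k+1) * (n.choose k : ℝ) * ((k:ℝ)/(1+k*x)))
        = ∫ x in (0:ℝ)..1, (1 - cfun N x) := by
      apply intervalIntegral.integral_congr_ae
      apply Filter.Eventually.of_forall
      intro x hx
      rw [Set.uIoc_of_le (by norm_num : (0:ℝ) ≤ 1)] at hx
      exact lemG N x hx.1
    rw [congrae, intervalIntegral.integral_sub intervalIntegrable_const (cfun_intg N)]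
    simp
  have hR0 : ∀ N : ℕ, 0 ≤ ∫ x in (0:ℝ)..1, cfun N x := by
    intro N
    apply intervalIntegral.integral_nonneg (by norm_num : (0:ℝ) ≤ 1)
    exact fun u hu => cfun_nonneg N u hu
  have hRb : ∀ N : ℕ, (∫ x in (0:ℝ)..1, cfun N x)
      ≤ Real.exp (-(1/2) * Real.log ((N:ℝ)+1)) := by
    intro N
    calc (∫ x in (0:ℝ)..1, cfun N x)
        ≤ ∫ _x in (0:ℝ)..1, Real.exp (-(1/2) * Real.log ((N:ℝ)+1)) :=
          intervalIntegral.integral_mono_on (by norm_num) (cfun_intg N)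
            intervalIntegrable_const (fun x hx => cfun_bound N x hx)
      _ = Real.exp (-(1/2) * Real.log ((N:ℝ)+1)) := by simp
  have hb0 : Tendsto (fun N : ℕ => Real.exp (-(1/2) * Real.log ((N:ℝ)+1))) atTop (nhds 0) := by
    apply Real.tendsto_exp_atBot.comp
    have h1 : Tendsto (fun N : ℕ => Real.log ((N:ℝ)+1)) atTop atTop :=
      Real.tendsto_log_atTop.comp
        (tendsto_atTop_add_const_right atTop 1 tendsto_natCast_atTop_atTop)
    have h2 : Tendsto (fun y : ℝ => -(1/2) * y) atTop atBot := by
      apply Filter.Tendsto.const_mul_atTop_of_neg (by norm_num : (-(1/2):ℝ) < 0) tendsto_id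
    exact h2.comp h1
  have hRlim : Tendsto (fun N : ℕ => ∫ x in (0:ℝ)..1, cfun N x) atTop (nhds 0) :=
    squeeze_zero hR0 hRb hb0
  have final : Tendsto (fun N : ℕ => 1 - ∫ x in (0:ℝ)..1, cfun N x) atTop (nhds 1) := by
    have := Filter.Tendsto.sub
      (tendsto_const_nhds : Tendsto (fun _ : ℕ => (1:ℝ)) atTop (nhds 1)) hRlim
    simpa using this
  exact (funext key : _) ▸ final
end

section
/- For every real t with 0 < t < 1, the series ∑_{n=0}^∞ t^{n+1} ∑_{k=0}^n (−1)^{k+1} · binom(n,k) · ln(k+1) converges and its sum equals −t^2 · ∫_0^1 (1−x)/((1−t·(1−x))·ln x) dx, where the integral converges. -/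
open Filter MeasureTheory Real

open Set

-- basic facts on Ioo 0 1
lemma aux_log_neg {x : ℝ} (hx : x ∈ Set.Ioo (0:ℝ) 1) : Real.log x < 0 :=
  Real.log_neg hx.1 hx.2

lemma aux_one_sub_le {x : ℝ} (hx : x ∈ Set.Ioo (0:ℝ) 1) : 1 - x ≤ -Real.log x := by
  have := Real.log_le_sub_one_of_pos hx.1
  linarith

lemma aux_int_bdd {f : ℝ → ℝ} (hf : ContinuousOn f (Set.Ioo 0 1)) {M : ℝ}
    (hM : ∀ x ∈ Set.Ioo (0:ℝ) 1, |f x| ≤ M) : IntegrableOn f (Set.Ioo 0 1) := by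
  refine ⟨hf.aestronglyMeasurable measurableSet_Ioo, ?_⟩
  refine HasFiniteIntegral.restrict_of_bounded (C := M) (by simp [Real.volume_Ioo]) ?_
  exact (ae_restrict_iff' measurableSet_Ioo).2 (ae_of_all _ fun x hx => by
    simpa [Real.norm_eq_abs] using hM x hx)

lemma aux_cont_rpow (a : ℝ) : ContinuousOn (fun x : ℝ => x ^ a) (Set.Ioo 0 1) :=
  ContinuousOn.rpow_const continuousOn_id fun x hx => Or.inl (ne_of_gt hx.1)

lemma aux_cont_log : ContinuousOn Real.log (Set.Ioo (0:ℝ) 1) :=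
  Real.continuousOn_log.mono (fun x hx => by simp [ne_of_gt hx.1])

lemma aux_cont_fa (a : ℝ) :
    ContinuousOn (fun x : ℝ => (x ^ a - 1) / Real.log x) (Set.Ioo 0 1) :=
  ((aux_cont_rpow a).sub continuousOn_const).div aux_cont_log
    (fun x hx => ne_of_lt (aux_log_neg hx))

lemma aux_bound_fa {a : ℝ} (ha : 0 ≤ a) {x : ℝ} (hx : x ∈ Set.Ioo (0:ℝ) 1) :
    |(x ^ a - 1) / Real.log x| ≤ a := by
  have hlog := aux_log_neg hx
  have h1 : x ^ a ≤ 1 := Real.rpow_le_one hx.1.le hx.2.le ha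
  have h2 : 1 - x ^ a ≤ -(a * Real.log x) := by
    have h3 : a * Real.log x + 1 ≤ Real.exp (a * Real.log x) := Real.add_one_le_exp _
    rw [Real.rpow_def_of_pos hx.1, mul_comm]
    linarith
  rw [abs_div, abs_of_nonpos (by linarith), abs_of_neg hlog]
  rw [div_le_iff₀ (by linarith)]
  nlinarith [mul_nonneg ha (neg_nonneg.2 hlog.le)]

lemma aux_integrable_fa {a : ℝ} (ha : 0 ≤ a) :
    IntegrableOn (fun x : ℝ => (x ^ a - 1) / Real.log x) (Set.Ioo 0 1) :=
  aux_int_bdd (aux_cont_fa a) fun x hx => aux_bound_fa ha hx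

lemma aux_integrable_rpow {c : ℝ} (hc : -1 < c) :
    IntegrableOn (fun x : ℝ => x ^ c) (Set.Ioo 0 1) := by
  have := intervalIntegral.intervalIntegrable_rpow' (a := 0) (b := 1) hc
  rw [intervalIntegrable_iff_integrableOn_Ioo_of_le zero_le_one] at this
  exact this

lemma aux_integral_rpow {a : ℝ} (ha : 0 ≤ a) :
    ∫ x in Set.Ioo (0:ℝ) 1, x ^ a = 1 / (a + 1) := by
  rw [← integral_Ioc_eq_integral_Ioo, ← intervalIntegral.integral_of_le zero_le_one]
  rw [integral_rpow (Or.inl (by linarith))]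
  rw [Real.one_rpow, Real.zero_rpow (by linarith)]
  ring

-- derivative of G
lemma aux_G_deriv {a : ℝ} (ha : 0 ≤ a) :
    HasDerivAt (fun b : ℝ => ∫ x in Set.Ioo (0:ℝ) 1, (x ^ b - 1) / Real.log x)
      (1 / (a + 1)) a := by
  have key := hasDerivAt_integral_of_dominated_loc_of_deriv_le
    (μ := volume.restrict (Set.Ioo (0:ℝ) 1)) (x₀ := a)
    (F := fun b x => (x ^ b - 1) / Real.log x) (F' := fun b x => x ^ b)
    (bound := fun x => x ^ (a - 1/2)) (s := Metric.ball a (1/2)) (Metric.ball_mem_nhds a (by norm_num))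
    (Filter.Eventually.of_forall fun b =>
      ((aux_cont_fa b).aestronglyMeasurable measurableSet_Ioo))
    (aux_integrable_fa ha)
    ((aux_cont_rpow a).aestronglyMeasurable measurableSet_Ioo)
    ?_ ?_ ?_
  · have := key.2
    rwa [aux_integral_rpow ha] at this
  · refine (ae_restrict_iff' measurableSet_Ioo).2 (ae_of_all _ fun x hx => ?_)
    intro b hb
    rw [Real.norm_eq_abs, abs_of_nonneg (Real.rpow_nonneg hx.1.le _)]
    apply Real.rpow_le_rpow_of_exponent_ge hx.1 hx.2.le
    have := abs_lt.1 (mem_ball_iff_norm.1 hb)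
    linarith [this.1]
  · exact aux_integrable_rpow (by linarith)
  · refine (ae_restrict_iff' measurableSet_Ioo).2 (ae_of_all _ fun x hx => ?_)
    intro b _
    have hlog := aux_log_neg hx
    have h := ((hasStrictDerivAt_const_rpow hx.1 b).hasDerivAt.sub_const 1).div_const
      (Real.log x)
    have : x ^ b * Real.log x / Real.log x = x ^ b := by
      rw [mul_div_assoc, div_self (ne_of_lt hlog), mul_one]
    rwa [this] at h

lemma aux_frullani {a : ℝ} (ha : 0 ≤ a) :
    ∫ x in Set.Ioo (0:ℝ) 1, (x ^ a - 1) / Real.log x = Real.log (a + 1) := by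
  set G : ℝ → ℝ := fun b => ∫ x in Set.Ioo (0:ℝ) 1, (x ^ b - 1) / Real.log x with hG
  have hG0 : G 0 = 0 := by
    simp only [hG, Real.rpow_zero, sub_self, zero_div, integral_zero]
  have hD : ∀ b ∈ Set.Ico (0:ℝ) a, HasDerivWithinAt (fun b => G b - Real.log (b + 1)) 0
      (Set.Ici b) b := by
    intro b hb
    have h1 : HasDerivAt G (1 / (b + 1)) b := aux_G_deriv hb.1
    have h2 : HasDerivAt (fun b : ℝ => Real.log (b + 1)) (1 / (b + 1)) b := by
      have := (Real.hasDerivAt_log (ne_of_gt (by linarith [hb.1] : (0:ℝ) < b + 1))).comp b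
        ((hasDerivAt_id b).add_const 1)
      simpa [one_div, Function.comp_def] using this
    have h3 := h1.sub h2
    rw [sub_self] at h3
    exact h3.hasDerivWithinAt
  have hcont : ContinuousOn (fun b => G b - Real.log (b + 1)) (Set.Icc 0 a) := by
    intro b hb
    have h1 : HasDerivAt G (1 / (b + 1)) b := aux_G_deriv hb.1
    have h2 : HasDerivAt (fun b : ℝ => Real.log (b + 1)) (1 / (b + 1)) b := by
      have := (Real.hasDerivAt_log (ne_of_gt (by linarith [hb.1] : (0:ℝ) < b + 1))).comp b
        ((hasDerivAt_id b).add_const 1)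
      simpa [one_div, Function.comp_def] using this
    exact ((h1.sub h2).continuousAt).continuousWithinAt
  have h := constant_of_has_deriv_right_zero hcont hD a (Set.right_mem_Icc.2 ha)
  simp only [hG0, zero_add, Real.log_one, zero_sub, sub_zero, neg_zero] at h
  show G a = Real.log (a + 1)
  linarith

lemma aux_frullani_nat (k : ℕ) :
    ∫ x in Set.Ioo (0:ℝ) 1, ((x:ℝ) ^ k - 1) / Real.log x = Real.log ((k:ℝ) + 1) := by
  have h := aux_frullani (a := (k:ℝ)) (Nat.cast_nonneg k)
  simp_rw [Real.rpow_natCast] at h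
  exact h

lemma aux_integrable_fk (k : ℕ) :
    IntegrableOn (fun x : ℝ => (x ^ k - 1) / Real.log x) (Set.Ioo 0 1) := by
  have h := aux_integrable_fa (a := (k:ℝ)) (Nat.cast_nonneg k)
  simp_rw [Real.rpow_natCast] at h
  exact h

lemma aux_num_sum {n : ℕ} (hn : 1 ≤ n) (x : ℝ) :
    ∑ k ∈ Finset.range (n+1), (-1:ℝ)^(k+1) * (n.choose k : ℝ) * (x ^ k - 1)
      = -(1-x)^n := by
  have hb : ∀ y : ℝ, (y + 1)^n = ∑ k ∈ Finset.range (n+1), y^k * (n.choose k : ℝ) := by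
    intro y
    rw [add_pow]
    simp
  have h1 := hb (-x)
  have h2 := hb (-1)
  rw [show (-1:ℝ)+1 = 0 by ring, zero_pow (by omega)] at h2
  have hsplit : ∑ k ∈ Finset.range (n+1), (-1:ℝ)^(k+1) * (n.choose k : ℝ) * (x ^ k - 1)
      = -(∑ k ∈ Finset.range (n+1), (-x)^k * (n.choose k : ℝ))
        + ∑ k ∈ Finset.range (n+1), (-1:ℝ)^k * (n.choose k : ℝ) := by
    rw [← Finset.sum_neg_distrib, ← Finset.sum_add_distrib]
    apply Finset.sum_congr rfl
    intro k _
    ring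
  rw [hsplit, ← h1, ← h2]
  ring_nf

lemma aux_inner_sum {n : ℕ} (hn : 1 ≤ n) :
    ∑ k ∈ Finset.range (n+1), (-1:ℝ)^(k+1) * (n.choose k : ℝ) * Real.log ((k:ℝ)+1)
      = ∫ x in Set.Ioo (0:ℝ) 1, (-(1-x)^n) / Real.log x := by
  have hlog : ∀ k : ℕ, Real.log ((k:ℝ)+1)
      = ∫ x in Set.Ioo (0:ℝ) 1, ((x:ℝ) ^ k - 1) / Real.log x :=
    fun k => (aux_frullani_nat k).symm
  calc ∑ k ∈ Finset.range (n+1), (-1:ℝ)^(k+1) * (n.choose k : ℝ) * Real.log ((k:ℝ)+1)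
      = ∑ k ∈ Finset.range (n+1),
          ∫ x in Set.Ioo (0:ℝ) 1, (-1:ℝ)^(k+1) * (n.choose k : ℝ) * ((x ^ k - 1) / Real.log x) := by
        apply Finset.sum_congr rfl
        intro k _
        rw [hlog k, mul_assoc, ← integral_const_mul, ← integral_const_mul]
        congr 1
        funext x
        ring
    _ = ∫ x in Set.Ioo (0:ℝ) 1,
          ∑ k ∈ Finset.range (n+1), (-1:ℝ)^(k+1) * (n.choose k : ℝ) * ((x ^ k - 1) / Real.log x) := by
        rw [integral_finset_sum]
        intro k _
        exact ((aux_integrable_fk k).const_mul _)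
    _ = ∫ x in Set.Ioo (0:ℝ) 1, (-(1-x)^n) / Real.log x := by
        congr 1
        funext x
        simp_rw [mul_div_assoc'] -- a * (b/c) = a*b/c
        rw [← Finset.sum_div, aux_num_sum hn x]

lemma aux_bound_pown {n : ℕ} {x : ℝ} (hx : x ∈ Set.Ioo (0:ℝ) 1) :
    |(1-x)^(n+1) / Real.log x| ≤ 1 := by
  have hlog := aux_log_neg hx
  have h1 := aux_one_sub_le hx
  have hx1 : (0:ℝ) ≤ 1 - x := by linarith [hx.2]
  have h2 : (1-x)^(n+1) ≤ 1 - x := by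
    calc (1-x)^(n+1) ≤ (1-x)^1 := pow_le_pow_of_le_one hx1 (by linarith [hx.1]) (by omega)
      _ = 1 - x := pow_one _
  rw [abs_div, abs_of_nonneg (pow_nonneg hx1 _), abs_of_neg hlog, div_le_one (by linarith)]
  linarith

lemma aux_integrable_pown (n : ℕ) :
    IntegrableOn (fun x : ℝ => (1-x)^(n+1) / Real.log x) (Set.Ioo 0 1) := by
  apply aux_int_bdd _ (fun x hx => aux_bound_pown hx)
  exact (((continuous_const.sub continuous_id).pow _).continuousOn).div aux_cont_log
    (fun x hx => ne_of_lt (aux_log_neg hx))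


/-- For 0 < t < 1, ∑_{n=0}^∞ t^{n+1} ∑_{k=0}^n (−1)^{k+1} C(n,k) ln(k+1)
converges to −t² ∫_0^1 (1−x)/((1−t(1−x))·ln x) dx, with the integral convergent. -/
theorem stmt_13 (t : ℝ) (ht0 : 0 < t) (ht1 : t < 1) :
    IntegrableOn (fun x : ℝ => (1 - x) / ((1 - t * (1 - x)) * Real.log x)) (Set.Ioo 0 1) ∧
      Tendsto (fun N : ℕ => ∑ n ∈ Finset.range N,
          t ^ (n + 1) * ∑ k ∈ Finset.range (n + 1),
            (-1 : ℝ) ^ (k + 1) * (n.choose k : ℝ) * Real.log (k + 1))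
        atTop
        (nhds (-t ^ 2 * ∫ x in Set.Ioo (0:ℝ) 1,
          (1 - x) / ((1 - t * (1 - x)) * Real.log x))) := by
  have hden : ∀ x ∈ Set.Ioo (0:ℝ) 1, 1 - t < 1 - t * (1 - x) := by
    intro x hx
    nlinarith [hx.1, hx.2]
  have hgbd : ∀ x ∈ Set.Ioo (0:ℝ) 1,
      |(1 - x) / ((1 - t * (1 - x)) * Real.log x)| ≤ 1 / (1 - t) := by
    intro x hx
    have hlog := aux_log_neg hx
    have h1 := aux_one_sub_le hx
    have hd := hden x hx
    have hx1 : (0:ℝ) < 1 - x := by linarith [hx.2]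
    have hdpos : 0 < 1 - t * (1 - x) := by linarith
    rw [abs_div, abs_mul, abs_of_pos hdpos, abs_of_neg hlog,
      abs_of_pos hx1, div_le_div_iff₀ (mul_pos hdpos (by linarith : (0:ℝ) < -Real.log x)) (by linarith)]
    nlinarith
  have hgcont : ContinuousOn (fun x : ℝ => (1 - x) / ((1 - t * (1 - x)) * Real.log x))
      (Set.Ioo 0 1) := by
    apply ContinuousOn.div
    · exact (continuous_const.sub continuous_id).continuousOn
    · exact ((continuous_const.sub (continuous_const.mul
        (continuous_const.sub continuous_id))).continuousOn).mul aux_cont_log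
    · intro x hx
      exact mul_ne_zero (ne_of_gt (by linarith [hden x hx])) (ne_of_lt (aux_log_neg hx))
  refine ⟨aux_int_bdd hgcont hgbd, ?_⟩
  set g : ℝ → ℝ := fun x => (1 - x) / ((1 - t * (1 - x)) * Real.log x) with hg
  set F : ℕ → ℝ → ℝ := fun n x => (-t^(n+2)) * ((1-x)^(n+1) / Real.log x) with hF
  have hFint : ∀ n, Integrable (F n) (volume.restrict (Set.Ioo (0:ℝ) 1)) :=
    fun n => (aux_integrable_pown n).const_mul _
  have hnorm : ∀ n, ∫ x in Set.Ioo (0:ℝ) 1, ‖F n x‖ ≤ t^(n+2) := by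
    intro n
    have hb : ∀ x ∈ Set.Ioo (0:ℝ) 1, ‖F n x‖ ≤ t^(n+2) := by
      intro x hx
      have hbp := aux_bound_pown (n := n) hx
      simp only [hF, Real.norm_eq_abs, abs_mul, abs_neg, abs_pow, abs_of_pos ht0]
      nlinarith [pow_pos ht0 (n+2), abs_nonneg ((1-x)^(n+1) / Real.log x)]
    have hmono := integral_mono_ae (hFint n).norm (integrable_const _)
      ((ae_restrict_iff' measurableSet_Ioo).2 (ae_of_all _ hb))
    simpa [Real.volume_Ioo] using hmono
  have hsum : Summable (fun n => ∫ x in Set.Ioo (0:ℝ) 1, ‖F n x‖) := by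
    apply Summable.of_nonneg_of_le (fun n => integral_nonneg fun x => norm_nonneg _) hnorm
    apply Summable.congr ((summable_geometric_of_lt_one ht0.le ht1).mul_right (t^2))
    intro n
    rw [← pow_add]
  have hHS := MeasureTheory.hasSum_integral_of_summable_integral_norm
    (μ := volume.restrict (Set.Ioo (0:ℝ) 1)) hFint hsum
  have htsum : ∀ x ∈ Set.Ioo (0:ℝ) 1, ∑' n, F n x = -t^2 * g x := by
    intro x hx
    have hlog := aux_log_neg hx
    have hx1 : (0:ℝ) < 1 - x := by linarith [hx.2]
    have hr0 : 0 ≤ t * (1-x) := by positivity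
    have hr1 : t * (1-x) < 1 := by nlinarith [hx.1]
    have hgeo := tsum_geometric_of_lt_one hr0 hr1
    calc ∑' n, F n x = ∑' n, (-t^2 * ((1-x) / Real.log x)) * (t*(1-x))^n := by
          apply tsum_congr
          intro n
          simp only [hF]
          rw [mul_pow]
          ring
      _ = (-t^2 * ((1-x) / Real.log x)) * (1 - t*(1-x))⁻¹ := by rw [tsum_mul_left, hgeo]
      _ = -t^2 * g x := by
          rw [hg]
          have hd : 1 - t * (1 - x) ≠ 0 := ne_of_gt (by linarith [hden x hx])
          field_simp
  have hint_eq : (∫ x in Set.Ioo (0:ℝ) 1, ∑' n, F n x)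
      = -t^2 * ∫ x in Set.Ioo (0:ℝ) 1, g x := by
    rw [setIntegral_congr_fun measurableSet_Ioo htsum, integral_const_mul]
  have hterm : ∀ n : ℕ, (∫ x in Set.Ioo (0:ℝ) 1, F n x)
      = t^(n+2) * ∑ k ∈ Finset.range (n+2),
          (-1:ℝ)^(k+1) * ((n+1).choose k : ℝ) * Real.log ((k:ℝ)+1) := by
    intro n
    rw [show n + 2 = (n+1) + 1 from rfl, aux_inner_sum (n := n+1) (by omega),
      ← integral_const_mul]
    congr 1
    funext x
    simp only [hF]
    ring
  have hts : Tendsto (fun N => ∑ n ∈ Finset.range N, ∫ x in Set.Ioo (0:ℝ) 1, F n x)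
      atTop (nhds (-t ^ 2 * ∫ x in Set.Ioo (0:ℝ) 1, g x)) := by
    have h := hHS.tendsto_sum_nat
    rwa [hint_eq] at h
  rw [← tendsto_add_atTop_iff_nat 1]
  apply Tendsto.congr _ hts
  intro N
  rw [Finset.sum_range_succ']
  have h0 : t ^ (0 + 1) * ∑ k ∈ Finset.range (0 + 1),
      (-1:ℝ) ^ (k + 1) * ((0:ℕ).choose k : ℝ) * Real.log ((k:ℝ) + 1) = 0 := by
    simp
  rw [h0, add_zero]
  apply Finset.sum_congr rfl
  intro n _
  rw [hterm n]
end

section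
/- For every real t with −1 < t ≤ 1/2 and every complex s with Re(s) > 0, the double series ∑_{n=0}^∞ t^{n+1} ∑_{k=0}^n (−1)^k · binom(n,k) · (k+1)^{−s} converges and equals −∑_{k=1}^∞ (t/(t−1))^k / k^s. -/
open Filter Complex

section helpers
open MeasureTheory Set

private lemma geom_bound4 {r : ℝ} (h1 : -1 < r) (h2 : r ≤ 1 / 2) (N : ℕ) :
    |∑ i ∈ Finset.range N, r ^ i| ≤ 4 := by
  have hr1 : r ≠ 1 := by linarith
  rw [geom_sum_eq hr1, abs_div]
  have h3 : |r| ≤ 1 := abs_le.2 ⟨by linarith, by linarith⟩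
  have h3' : |r ^ N| ≤ 1 := by rw [_root_.abs_pow]; exact pow_le_one₀ (abs_nonneg r) h3
  obtain ⟨h3a, h3b⟩ := abs_le.1 h3'
  have h4 : |r ^ N - 1| ≤ 2 := abs_le.2 ⟨by linarith, by linarith⟩
  have h5 : |r - 1| = 1 - r := by rw [abs_of_neg (by linarith : r - 1 < 0)]; ring
  rw [h5]
  have h6 : (1:ℝ)/2 ≤ 1 - r := by linarith
  calc |r ^ N - 1| / (1 - r) ≤ 2 / (1 - r) := by gcongr
    _ ≤ 2 / (1/2) := by gcongr
    _ = 4 := by norm_num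

private lemma aux_integrable {s : ℂ} (hs : 0 < s.re) {c : ℝ} (hc : 0 < c) :
    IntegrableOn (fun x : ℝ => (x : ℂ) ^ (s - 1) * (Real.exp (-(c * x)) : ℂ)) (Ioi 0) := by
  have h := Complex.GammaIntegral_convergent hs
  rw [← mul_zero c, ← integrableOn_Ioi_comp_mul_left_iff _ _ hc] at h
  refine IntegrableOn.congr_fun (h.const_mul ((1:ℂ) / (c:ℂ) ^ (s - 1)))
      (fun x (hx : 0 < x) ↦ ?_) measurableSet_Ioi
  have hcne : ((c:ℂ)) ^ (s-1) ≠ 0 := by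
    rw [Ne, cpow_eq_zero_iff, not_and_or]
    exact Or.inl (ofReal_ne_zero.mpr hc.ne')
  show (1:ℂ) / (c:ℂ) ^ (s-1) * ((-(c*x) : ℝ).exp * ((c*x : ℝ):ℂ) ^ (s-1)) = _
  rw [ofReal_mul, mul_cpow_ofReal_nonneg hc.le hx.le]
  field_simp

private lemma aux_A {s : ℂ} (hs : 0 < s.re) (k : ℕ) :
    Complex.Gamma s * ((k + 1 : ℕ) : ℂ) ^ (-s)
      = ∫ x in Ioi (0:ℝ), (x : ℂ) ^ (s - 1) * (Real.exp (-(((k:ℝ) + 1) * x)) : ℂ) := by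
  have hk : (0:ℝ) < (k:ℝ) + 1 := by positivity
  have h := integral_cpow_mul_exp_neg_mul_Ioi hs hk
  have e1 : ∀ x : ℝ, Complex.exp (-(((k:ℝ)+1 : ℝ) * (x:ℂ))) = (Real.exp (-(((k:ℝ)+1) * x)) : ℂ) := by
    intro x
    rw [Complex.ofReal_exp]
    push_cast
    ring_nf
  simp_rw [e1] at h
  rw [h]
  have harg : (((((k:ℝ)+1 : ℝ)) : ℂ)).arg ≠ Real.pi := by
    rw [Complex.arg_ofReal_of_nonneg hk.le]
    exact (Real.pi_ne_zero).symm
  have : ((1:ℂ)/↑((k:ℝ)+1)) ^ s = (↑((k:ℝ)+1) : ℂ) ^ (-s) := by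
    rw [one_div, Complex.inv_cpow _ _ harg, ← Complex.cpow_neg]
  rw [this, mul_comm]
  norm_num

private lemma dct_main {s : ℂ} (hs : 0 < s.re) (c ρ : ℝ → ℝ)
    (hc_cont : Continuous c) (hρ_cont : Continuous ρ)
    (hc : ∀ x ∈ Ioi (0:ℝ), |c x| ≤ Real.exp (-x))
    (hρ1 : ∀ x ∈ Ioi (0:ℝ), -1 < ρ x) (hρ2 : ∀ x ∈ Ioi (0:ℝ), ρ x ≤ 1 / 2) :
    Tendsto (fun N : ℕ => ∫ x in Ioi (0:ℝ),
        (x : ℂ) ^ (s - 1) * (c x : ℂ) * ∑ i ∈ Finset.range N, (ρ x : ℂ) ^ i) atTop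
      (nhds (∫ x in Ioi (0:ℝ), (x : ℂ) ^ (s - 1) * (c x : ℂ) * (1 - (ρ x : ℂ))⁻¹)) := by
  have hcpow : ContinuousOn (fun x : ℝ => (x:ℂ) ^ (s-1)) (Ioi 0) := by
    apply continuousOn_of_forall_continuousAt
    intro x hx
    exact (continuousAt_cpow_const (ofReal_mem_slitPlane.2 hx)).comp
      continuous_ofReal.continuousAt
  apply tendsto_integral_of_dominated_convergence
    (fun x => 4 * (Real.exp (-x) * x ^ (s.re - 1)))
  · intro N
    refine ContinuousOn.aestronglyMeasurable ?_ measurableSet_Ioi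
    refine (hcpow.mul (continuous_ofReal.comp hc_cont).continuousOn).mul ?_
    exact (continuous_finset_sum _ fun i _ =>
      ((continuous_ofReal.comp hρ_cont).pow i)).continuousOn
  · exact (Real.GammaIntegral_convergent hs).const_mul 4
  · intro N
    rw [ae_restrict_iff' measurableSet_Ioi]
    filter_upwards with x hx'
    have hxpos : (0:ℝ) < x := hx'
    rw [norm_mul, norm_mul]
    have e1 : ‖(x:ℂ) ^ (s-1)‖ = x ^ (s.re - 1) := by
      rw [Complex.norm_cpow_eq_rpow_re_of_pos hxpos, Complex.sub_re,
        Complex.one_re]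
    have e2 : ‖((c x : ℝ):ℂ)‖ ≤ Real.exp (-x) := by
      rw [Complex.norm_real, Real.norm_eq_abs]; exact hc x hx'
    have e3 : ‖∑ i ∈ Finset.range N, ((ρ x :ℝ):ℂ) ^ i‖ ≤ 4 := by
      have : ∑ i ∈ Finset.range N, ((ρ x :ℝ):ℂ) ^ i
          = ((∑ i ∈ Finset.range N, (ρ x) ^ i : ℝ) : ℂ) := by push_cast; rfl
      rw [this, Complex.norm_real, Real.norm_eq_abs]
      exact geom_bound4 (hρ1 x hx') (hρ2 x hx') N
    rw [e1]
    have hx1 : (0:ℝ) ≤ x ^ (s.re - 1) := Real.rpow_nonneg hxpos.le _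
    have hexp : (0:ℝ) ≤ Real.exp (-x) := (Real.exp_pos _).le
    calc x ^ (s.re - 1) * ‖((c x : ℝ):ℂ)‖ * ‖∑ i ∈ Finset.range N, ((ρ x :ℝ):ℂ) ^ i‖
        ≤ x ^ (s.re - 1) * Real.exp (-x) * 4 := by
          apply mul_le_mul (by apply mul_le_mul_of_nonneg_left e2 hx1) e3 (norm_nonneg _)
          positivity
      _ = 4 * (Real.exp (-x) * x ^ (s.re - 1)) := by ring
  · rw [ae_restrict_iff' measurableSet_Ioi]
    filter_upwards with x hx'
    have hnorm : ‖((ρ x : ℝ):ℂ)‖ < 1 := by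
      rw [Complex.norm_real, Real.norm_eq_abs, abs_lt]
      exact ⟨hρ1 x hx', by linarith [hρ2 x hx']⟩
    exact (hasSum_geometric_of_norm_lt_one hnorm).tendsto_sum_nat.const_mul _

private lemma aux_frac {t E : ℝ} (ht1 : t - 1 ≠ 0) (h1 : 1 - t*(1-E) ≠ 0)
    (h2 : 1 - (t/(t-1))*E ≠ 0) :
    ((t*E : ℝ):ℂ) * ((1:ℂ) - ((t*(1-E) : ℝ):ℂ))⁻¹
      = -(((t/(t-1)*E : ℝ):ℂ) * ((1:ℂ) - ((t/(t-1)*E : ℝ):ℂ))⁻¹) := by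
  have h2' : t - 1 - t*E ≠ 0 := by
    intro h
    apply h2
    have : 1 - t/(t-1)*E = (t - 1 - t*E)/(t-1) := by field_simp
    rw [this, h, zero_div]
  have key : (t*E) * (1 - t*(1-E))⁻¹ = -((t/(t-1)*E) * (1 - (t/(t-1))*E)⁻¹) := by
    have e2 : 1 - t/(t-1)*E = (t - 1 - t*E)/(t-1) := by field_simp
    rw [e2]
    field_simp
    ring
  rw [show (1:ℂ) - ((t*(1-E):ℝ):ℂ) = ((1 - t*(1-E) : ℝ) : ℂ) by push_cast; ring,
      show (1:ℂ) - ((t/(t-1)*E:ℝ):ℂ) = ((1 - t/(t-1)*E : ℝ):ℂ) by push_cast; ring,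
      ← ofReal_inv, ← ofReal_inv, ← ofReal_mul, ← ofReal_mul, ← ofReal_neg]
  exact_mod_cast congrArg (fun r : ℝ => (r : ℂ)) key

end helpers

open MeasureTheory Set in
/-- For −1 < t ≤ 1/2 and Re(s) > 0, the double series
∑_{n=0}^∞ t^{n+1} ∑_{k=0}^n (−1)^k C(n,k) (k+1)^{−s} converges and equals
−∑_{k=1}^∞ (t/(t−1))^k / k^s. -/
theorem stmt_14 (t : ℝ) (ht : -1 < t) (ht' : t ≤ 1 / 2) (s : ℂ) (hs : 0 < s.re) :
    ∃ L : ℂ,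
      Tendsto (fun N : ℕ => ∑ k ∈ Finset.range N,
          ((t / (t - 1) : ℝ) : ℂ) ^ (k + 1) / ((k + 1 : ℕ) : ℂ) ^ s) atTop (nhds L) ∧
      Tendsto (fun N : ℕ => ∑ n ∈ Finset.range N,
          (t : ℂ) ^ (n + 1) * ∑ k ∈ Finset.range (n + 1),
            (-1 : ℂ) ^ k * (n.choose k : ℂ) * ((k + 1 : ℕ) : ℂ) ^ (-s))
        atTop (nhds (-L)) := by
  have ht1 : t - 1 < 0 := by linarith
  have ht1' : (t:ℂ) - 1 ≠ 0 := by
    rw [show (t:ℂ) - 1 = ((t - 1 : ℝ):ℂ) by push_cast; ring]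
    exact ofReal_ne_zero.mpr ht1.ne
  have hz1 : -1 ≤ t / (t - 1) := by rw [le_div_iff_of_neg ht1]; linarith
  have hz2 : t / (t - 1) ≤ 1 / 2 := by rw [div_le_iff_of_neg ht1]; linarith
  have hΓ : Complex.Gamma s ≠ 0 := Complex.Gamma_ne_zero_of_re_pos hs
  -- per-x facts
  have hEx : ∀ x ∈ Ioi (0:ℝ), 0 < Real.exp (-x) ∧ Real.exp (-x) < 1 := by
    intro x hx
    exact ⟨Real.exp_pos _, Real.exp_lt_one_iff.mpr (by simpa using (mem_Ioi.mp hx))⟩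
  -- facts for the L-side ratio q x = (t/(t-1)) * exp (-x)
  have hq1 : ∀ x ∈ Ioi (0:ℝ), -1 < t / (t - 1) * Real.exp (-x) := by
    intro x hx
    obtain ⟨hE0, hE1⟩ := hEx x hx
    nlinarith [mul_nonneg (by linarith : (0:ℝ) ≤ 1 + t / (t-1)) hE0.le]
  have hq2 : ∀ x ∈ Ioi (0:ℝ), t / (t - 1) * Real.exp (-x) ≤ 1 / 2 := by
    intro x hx
    obtain ⟨hE0, hE1⟩ := hEx x hx
    nlinarith [mul_nonneg (by linarith : (0:ℝ) ≤ 1/2 - t / (t-1)) hE0.le]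
  have hcq : ∀ x ∈ Ioi (0:ℝ), |t / (t - 1) * Real.exp (-x)| ≤ Real.exp (-x) := by
    intro x hx
    obtain ⟨hE0, hE1⟩ := hEx x hx
    rw [abs_mul, abs_of_pos hE0]
    have : |t / (t-1)| ≤ 1 := abs_le.2 ⟨by linarith, by linarith⟩
    nlinarith
  -- facts for the g-side ratio w x = t * (1 - exp (-x))
  have hw1 : ∀ x ∈ Ioi (0:ℝ), -1 < t * (1 - Real.exp (-x)) := by
    intro x hx
    obtain ⟨hE0, hE1⟩ := hEx x hx
    nlinarith [mul_nonneg (by linarith : (0:ℝ) ≤ 1 + t) (by linarith : (0:ℝ) ≤ 1 - Real.exp (-x))]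
  have hw2 : ∀ x ∈ Ioi (0:ℝ), t * (1 - Real.exp (-x)) ≤ 1 / 2 := by
    intro x hx
    obtain ⟨hE0, hE1⟩ := hEx x hx
    nlinarith [mul_nonneg (by linarith : (0:ℝ) ≤ 1/2 - t) (by linarith : (0:ℝ) ≤ 1 - Real.exp (-x))]
  have hcw : ∀ x ∈ Ioi (0:ℝ), |t * Real.exp (-x)| ≤ Real.exp (-x) := by
    intro x hx
    obtain ⟨hE0, hE1⟩ := hEx x hx
    rw [abs_mul, abs_of_pos hE0]
    have : |t| ≤ 1 := abs_le.2 ⟨by linarith, by linarith⟩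
    nlinarith
  -- the common limit integral
  set I : ℂ := ∫ x in Ioi (0:ℝ), (x:ℂ)^(s-1) * ((t / (t - 1) * Real.exp (-x) : ℝ):ℂ) *
      (1 - ((t / (t - 1) * Real.exp (-x) : ℝ):ℂ))⁻¹ with hI
  refine ⟨(Complex.Gamma s)⁻¹ * I, ?_, ?_⟩
  · -- Part 1
    have key1 : ∀ N : ℕ, Complex.Gamma s * (∑ k ∈ Finset.range N,
          ((t / (t - 1) : ℝ) : ℂ) ^ (k + 1) / ((k + 1 : ℕ) : ℂ) ^ s)
        = ∫ x in Ioi (0:ℝ), (x:ℂ)^(s-1) * ((t / (t - 1) * Real.exp (-x) : ℝ):ℂ) *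
            ∑ i ∈ Finset.range N, ((t / (t - 1) * Real.exp (-x) : ℝ):ℂ)^i := by
      intro N
      rw [Finset.mul_sum]
      have step : ∀ k ∈ Finset.range N,
          Complex.Gamma s * (((t / (t - 1) : ℝ) : ℂ) ^ (k + 1) / ((k + 1 : ℕ) : ℂ) ^ s)
          = ∫ x in Ioi (0:ℝ), ((t / (t - 1) : ℝ) : ℂ) ^ (k + 1) *
              ((x:ℂ)^(s-1) * (Real.exp (-(((k:ℝ)+1)*x)) : ℂ)) := by
        intro k _
        rw [integral_const_mul, ← aux_A hs k]
        have hne : ((k + 1 : ℕ) : ℂ) ^ s ≠ 0 := by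
          rw [Ne, cpow_eq_zero_iff, not_and_or]
          exact Or.inl (Nat.cast_ne_zero.mpr (Nat.succ_ne_zero k))
        rw [Complex.cpow_neg]
        field_simp
      rw [Finset.sum_congr rfl step, ← integral_finset_sum]
      · apply setIntegral_congr_fun measurableSet_Ioi
        intro x hx
        beta_reduce
        have hE : ∀ k : ℕ, Real.exp (-(((k:ℝ)+1)*x)) = Real.exp (-x) ^ (k+1) := by
          intro k
          rw [← Real.exp_nat_mul]
          congr 1
          push_cast
          ring
        rw [Finset.mul_sum]
        refine Finset.sum_congr rfl fun k _ => ?_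
        rw [hE k]
        push_cast
        ring
      · intro k _
        exact (aux_integrable hs (show (0:ℝ) < (k:ℝ)+1 by positivity)).const_mul _
    have t1 := dct_main hs (fun x => t / (t - 1) * Real.exp (-x))
      (fun x => t / (t - 1) * Real.exp (-x))
      (by fun_prop) (by fun_prop) hcq hq1 hq2
    have t1' : Tendsto (fun N : ℕ => Complex.Gamma s * ∑ k ∈ Finset.range N,
        ((t / (t - 1) : ℝ) : ℂ) ^ (k + 1) / ((k + 1 : ℕ) : ℂ) ^ s) atTop (nhds I) := by
      refine t1.congr fun N => ?_
      exact (key1 N).symm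
    have t1'' := t1'.const_mul (Complex.Gamma s)⁻¹
    refine t1''.congr fun N => ?_
    rw [← mul_assoc, inv_mul_cancel₀ hΓ, one_mul]
  · -- Part 2
    have hptn : ∀ (n:ℕ), ∀ x ∈ Ioi (0:ℝ),
        ∑ k ∈ Finset.range (n+1), ((t:ℂ)^(n+1) * ((-1:ℂ)^k * (n.choose k : ℂ))) *
            ((x:ℂ)^(s-1) * (Real.exp (-(((k:ℝ)+1)*x)) : ℂ))
        = (x:ℂ)^(s-1) * ((t * Real.exp (-x) : ℝ):ℂ) * ((t*(1-Real.exp (-x)) : ℝ):ℂ)^n := by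
      intro n x hx
      have hE : ∀ k : ℕ, Real.exp (-(((k:ℝ)+1)*x)) = Real.exp (-x) * Real.exp (-x) ^ k := by
        intro k
        rw [← Real.exp_nat_mul, ← Real.exp_add]
        congr 1
        push_cast
        ring
      have hbin := add_pow (-(Real.exp (-x) : ℂ)) 1 n
      calc ∑ k ∈ Finset.range (n+1), ((t:ℂ)^(n+1) * ((-1:ℂ)^k * (n.choose k : ℂ))) *
              ((x:ℂ)^(s-1) * (Real.exp (-(((k:ℝ)+1)*x)) : ℂ))
          = ∑ k ∈ Finset.range (n+1), (x:ℂ)^(s-1) * ((t:ℂ) * (Real.exp (-x) : ℂ)) *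
              ((t:ℂ)^n * ((-(Real.exp (-x):ℂ))^k * (1:ℂ)^(n-k) * (n.choose k : ℂ))) := by
            refine Finset.sum_congr rfl fun k _ => ?_
            rw [hE k]
            push_cast
            ring
        _ = (x:ℂ)^(s-1) * ((t:ℂ) * (Real.exp (-x) : ℂ)) *
              ((t:ℂ)^n * ((-(Real.exp (-x):ℂ)) + 1)^n) := by
            rw [hbin]
            rw [← Finset.mul_sum, ← Finset.mul_sum]
        _ = (x:ℂ)^(s-1) * ((t * Real.exp (-x) : ℝ):ℂ) * ((t*(1-Real.exp (-x)) : ℝ):ℂ)^n := by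
            push_cast
            rw [mul_pow]
            ring
    have hψint : ∀ n : ℕ, IntegrableOn (fun x : ℝ => (x:ℂ)^(s-1) *
        ((t * Real.exp (-x) : ℝ):ℂ) * ((t*(1-Real.exp (-x)) : ℝ):ℂ)^n) (Ioi 0) := by
      intro n
      refine IntegrableOn.congr_fun (integrable_finset_sum _ fun k _ => ?_) (hptn n)
        measurableSet_Ioi
      exact (aux_integrable hs (show (0:ℝ) < (k:ℝ)+1 by positivity)).const_mul _
    have keyn : ∀ n : ℕ, Complex.Gamma s * ((t : ℂ) ^ (n + 1) *
          ∑ k ∈ Finset.range (n + 1),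
            (-1 : ℂ) ^ k * (n.choose k : ℂ) * ((k + 1 : ℕ) : ℂ) ^ (-s))
        = ∫ x in Ioi (0:ℝ), (x:ℂ)^(s-1) * ((t * Real.exp (-x) : ℝ):ℂ) *
            ((t*(1-Real.exp (-x)) : ℝ):ℂ)^n := by
      intro n
      calc Complex.Gamma s * ((t : ℂ) ^ (n + 1) * ∑ k ∈ Finset.range (n + 1),
              (-1 : ℂ) ^ k * (n.choose k : ℂ) * ((k + 1 : ℕ) : ℂ) ^ (-s))
          = ∑ k ∈ Finset.range (n + 1), ((t:ℂ)^(n+1) * ((-1:ℂ)^k * (n.choose k : ℂ))) *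
              (Complex.Gamma s * ((k + 1 : ℕ) : ℂ) ^ (-s)) := by
            rw [Finset.mul_sum, Finset.mul_sum]
            exact Finset.sum_congr rfl fun k _ => by ring
        _ = ∑ k ∈ Finset.range (n + 1), ∫ x in Ioi (0:ℝ),
              ((t:ℂ)^(n+1) * ((-1:ℂ)^k * (n.choose k : ℂ))) *
                ((x:ℂ)^(s-1) * (Real.exp (-(((k:ℝ)+1)*x)) : ℂ)) := by
            refine Finset.sum_congr rfl fun k _ => ?_
            rw [aux_A hs k, integral_const_mul]
        _ = ∫ x in Ioi (0:ℝ), ∑ k ∈ Finset.range (n + 1),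
              ((t:ℂ)^(n+1) * ((-1:ℂ)^k * (n.choose k : ℂ))) *
                ((x:ℂ)^(s-1) * (Real.exp (-(((k:ℝ)+1)*x)) : ℂ)) :=
            (integral_finset_sum _ (fun k _ => (aux_integrable hs
              (Nat.cast_add_one_pos k)).const_mul _)).symm
        _ = ∫ x in Ioi (0:ℝ), (x:ℂ)^(s-1) * ((t * Real.exp (-x) : ℝ):ℂ) *
              ((t*(1-Real.exp (-x)) : ℝ):ℂ)^n :=
            setIntegral_congr_fun measurableSet_Ioi (hptn n)
    have key2 : ∀ N : ℕ, Complex.Gamma s * (∑ n ∈ Finset.range N,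
          (t : ℂ) ^ (n + 1) * ∑ k ∈ Finset.range (n + 1),
            (-1 : ℂ) ^ k * (n.choose k : ℂ) * ((k + 1 : ℕ) : ℂ) ^ (-s))
        = ∫ x in Ioi (0:ℝ), (x:ℂ)^(s-1) * ((t * Real.exp (-x) : ℝ):ℂ) *
            ∑ n ∈ Finset.range N, ((t*(1-Real.exp (-x)) : ℝ):ℂ)^n := by
      intro N
      rw [Finset.mul_sum, Finset.sum_congr rfl fun n _ => keyn n,
        ← integral_finset_sum _ (fun n _ => hψint n)]
      apply setIntegral_congr_fun measurableSet_Ioi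
      intro x hx
      beta_reduce
      rw [Finset.mul_sum]
    have t2 := dct_main hs (fun x => t * Real.exp (-x))
      (fun x => t * (1 - Real.exp (-x)))
      (by fun_prop) (by fun_prop) hcw hw1 hw2
    have hJ : (∫ x in Ioi (0:ℝ), (x:ℂ)^(s-1) * ((t * Real.exp (-x) : ℝ):ℂ) *
        (1 - ((t*(1-Real.exp (-x)) : ℝ):ℂ))⁻¹) = -I := by
      rw [hI, ← integral_neg]
      apply setIntegral_congr_fun measurableSet_Ioi
      intro x hx
      obtain ⟨hE0, hE1⟩ := hEx x hx
      have h1 : 1 - t*(1-Real.exp (-x)) ≠ 0 := by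
        have := hw2 x hx
        intro h
        nlinarith [hw2 x hx]
      have h2 : 1 - (t/(t-1))*Real.exp (-x) ≠ 0 := by
        intro h
        nlinarith [hq2 x hx]
      have := aux_frac (E := Real.exp (-x)) ht1.ne h1 h2
      beta_reduce
      rw [mul_assoc, mul_assoc, this]
      ring
    beta_reduce at t2
    have t2' : Tendsto (fun N : ℕ => Complex.Gamma s * ∑ n ∈ Finset.range N,
        (t : ℂ) ^ (n + 1) * ∑ k ∈ Finset.range (n + 1),
          (-1 : ℂ) ^ k * (n.choose k : ℂ) * ((k + 1 : ℕ) : ℂ) ^ (-s)) atTop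
        (nhds (∫ x in Ioi (0:ℝ), (x:ℂ)^(s-1) * ((t * Real.exp (-x) : ℝ):ℂ) *
          (1 - ((t*(1-Real.exp (-x)) : ℝ):ℂ))⁻¹)) := by
      refine t2.congr fun N => ?_
      exact (key2 N).symm
    rw [hJ] at t2'
    have t2'' := t2'.const_mul (Complex.Gamma s)⁻¹
    have : (Complex.Gamma s)⁻¹ * -I = -((Complex.Gamma s)⁻¹ * I) := by ring
    rw [this] at t2''
    refine t2''.congr fun N => ?_
    rw [← mul_assoc, inv_mul_cancel₀ hΓ, one_mul]
end

section
/- The double integral ∫_0^1 ∫_0^1 t·(1−x)/((1−t·(1−x))·ln x) dt dx converges and equals −γ; equivalently, γ = −∫_0^1 ∫_0^1 t(1−x)/((1−t(1−x))·ln x) dt dx, where γ is Euler's constant. -/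
open MeasureTheory Real intervalIntegral

-- t-integral antiderivative
lemma tint (a : ℝ) (ha : 0 < a) (ha1 : a < 1) :
    ∫ t in (0:ℝ)..1, t * a / (1 - t * a) = -1 - Real.log (1 - a) / a := by
  have key : ∀ t ∈ Set.uIcc (0:ℝ) 1, HasDerivAt (fun t => -t - Real.log (1 - t * a) / a)
      (t * a / (1 - t * a)) t := by
    intro t ht
    rw [Set.uIcc_of_le (by norm_num)] at ht
    have hpos : 0 < 1 - t * a := by nlinarith [ht.1, ht.2]
    have h1 : HasDerivAt (fun t : ℝ => 1 - t * a) (-a) t := by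
      simpa using (hasDerivAt_id t).mul_const a |>.const_sub 1
    have h2 : HasDerivAt (fun t => Real.log (1 - t * a)) (-a / (1 - t * a)) t :=
      by simpa [Function.comp_def, div_eq_inv_mul] using (Real.hasDerivAt_log hpos.ne').comp t h1
    have h3 := ((h2.div_const a).const_sub 0).sub_const 0
    have := (hasDerivAt_id t).neg.sub (h2.div_const a)
    refine this.congr_deriv ?_
    have ha0 := ha.ne'
    have hp0 := hpos.ne'
    have hp1 : 1 - a * t ≠ 0 := by rwa [mul_comm]
    field_simp
    ring
  rw [intervalIntegral.integral_eq_sub_of_hasDerivAt key ?cont]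
  · simp
  case cont =>
    apply ContinuousOn.intervalIntegrable
    apply ContinuousOn.div
    · fun_prop
    · fun_prop
    · intro t ht
      rw [Set.uIcc_of_le (by norm_num)] at ht
      nlinarith [ht.1, ht.2]

-- ∫ s in n..n+1, x^s
lemma sint (x : ℝ) (hx : 0 < x) (hx1 : x < 1) (n : ℕ) :
    ∫ s in (n:ℝ)..(n+1:ℕ), x ^ s = (x ^ ((n:ℝ)+1) - x ^ (n:ℝ)) / Real.log x := by
  have hlog : Real.log x ≠ 0 := by
    have := Real.log_neg hx hx1; linarith
  have key : ∀ s ∈ Set.uIcc (n:ℝ) ((n+1:ℕ):ℝ), HasDerivAt (fun s => x ^ s / Real.log x)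
      (x ^ s) s := by
    intro s _
    have h1 : HasDerivAt (fun s : ℝ => x ^ s) (x ^ s * Real.log x) s :=
      (Real.hasStrictDerivAt_const_rpow hx s).hasDerivAt
    have := h1.div_const (Real.log x)
    simpa [mul_div_assoc, mul_div_cancel_right₀ _ hlog] using this
  rw [intervalIntegral.integral_eq_sub_of_hasDerivAt key ?cont]
  · push_cast; ring
  case cont =>
    have : Continuous (fun s : ℝ => x ^ s) := by
      simp only [Real.rpow_def_of_pos hx]
      fun_prop
    exact this.intervalIntegrable _ _

lemma rint (s : ℝ) (hs : 0 < s) : ∫ x in (0:ℝ)..1, x ^ s = 1/(s+1) := by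
  rw [integral_rpow (Or.inl (by linarith))]
  rw [Real.zero_rpow (by linarith)]; norm_num

lemma oint (n : ℕ) : ∫ s in (n:ℝ)..((n:ℝ)+1), 1/(s+1) = Real.log ((n:ℝ)+2) - Real.log ((n:ℝ)+1) := by
  have := intervalIntegral.integral_comp_add_right (a := (n:ℝ)) (b := (n:ℝ)+1) (d := 1)
    (f := fun u => 1/u)
  rw [this, integral_one_div (by
    rw [Set.uIcc_of_le (by linarith)]
    intro h
    simp only [Set.mem_Icc] at h
    have : (0:ℝ) < (n:ℝ)+1 := by positivity
    linarith [h.1])]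
  rw [show (n:ℝ)+1+1 = (n:ℝ)+2 by ring, Real.log_div (by positivity) (by positivity)]

lemma phi_eq {x : ℝ} (hx : 0 < x) (hx1 : x < 1) (n : ℕ) :
    (x ^ (n+1) - x ^ n) / Real.log x = x ^ n * ((1-x) / (-Real.log x)) := by
  have hlog : Real.log x < 0 := Real.log_neg hx hx1
  field_simp
  ring

lemma phi_bound {x : ℝ} (hx : 0 < x) (hx1 : x < 1) (n : ℕ) :
    0 ≤ (x ^ (n+1) - x ^ n) / Real.log x ∧ (x ^ (n+1) - x ^ n) / Real.log x ≤ 1 := by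
  have hlog : Real.log x < 0 := Real.log_neg hx hx1
  have hL : 1 - x ≤ -Real.log x := by
    have := Real.log_le_sub_one_of_pos hx; linarith
  have hxn : (0:ℝ) ≤ x ^ n := by positivity
  have hxn1 : x ^ n ≤ 1 := pow_le_one₀ hx.le hx1.le
  have hratio : (1-x) / (-Real.log x) ≤ 1 := by
    rw [div_le_one (by linarith)]; exact hL
  have hratio0 : 0 ≤ (1-x) / (-Real.log x) := by
    apply div_nonneg <;> linarith
  rw [phi_eq hx hx1]
  constructor
  · positivity
  · calc x ^ n * ((1-x)/(-Real.log x)) ≤ 1 * 1 :=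
        mul_le_mul hxn1 hratio hratio0 zero_le_one
      _ = 1 := by ring

lemma B1 (n : ℕ) :
    IntegrableOn (fun x => (x ^ (n+1) - x ^ n) / Real.log x) (Set.Ioo (0:ℝ) 1) ∧
    ∫ x in Set.Ioo (0:ℝ) 1, (x ^ (n+1) - x ^ n) / Real.log x
      = Real.log ((n:ℝ)+2) - Real.log ((n:ℝ)+1) := by
  set φ : ℝ → ℝ := fun x => (x ^ (n+1) - x ^ n) / Real.log x with hφ
  have hmeas : Measurable φ := by
    apply Measurable.div
    · exact (measurable_id.pow_const (n+1)).sub (measurable_id.pow_const n)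
    · exact Real.measurable_log
  have hvol : volume (Set.Ioo (0:ℝ) 1) ≠ ⊤ := by
    simp [Real.volume_Ioo]
  have hint : IntegrableOn φ (Set.Ioo (0:ℝ) 1) := by
    apply Measure.integrableOn_of_bounded (M := 1) hvol hmeas.aestronglyMeasurable
    rw [ae_restrict_iff' measurableSet_Ioo]
    filter_upwards with x hx
    have h := phi_bound hx.1 hx.2 n
    rw [Real.norm_eq_abs, abs_of_nonneg h.1]; exact h.2
  refine ⟨hint, ?_⟩
  have hnn : 0 ≤ᵐ[volume.restrict (Set.Ioo (0:ℝ) 1)] φ := by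
    rw [Filter.EventuallyLE, ae_restrict_iff' measurableSet_Ioo]
    filter_upwards with x hx using (phi_bound hx.1 hx.2 n).1
  have hsJ : ∀ s ∈ Set.Ioc (n:ℝ) ((n:ℝ)+1), (0:ℝ) < s := by
    intro s hs
    have : (0:ℝ) ≤ n := Nat.cast_nonneg n
    linarith [hs.1]
  have hvolJ : volume (Set.Ioc (n:ℝ) ((n:ℝ)+1)) ≠ ⊤ := by
    simp [Real.volume_Ioc]
  have key : ∫⁻ x in Set.Ioo (0:ℝ) 1, ENNReal.ofReal (φ x)
      = ENNReal.ofReal (Real.log ((n:ℝ)+2) - Real.log ((n:ℝ)+1)) := by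
    have step1 : ∫⁻ x in Set.Ioo (0:ℝ) 1, ENNReal.ofReal (φ x)
        = ∫⁻ x in Set.Ioo (0:ℝ) 1, ∫⁻ s in Set.Ioc (n:ℝ) ((n:ℝ)+1),
            ENNReal.ofReal (Real.exp (Real.log x * s)) := by
      apply setLIntegral_congr_fun measurableSet_Ioo
      intro x hx
      obtain ⟨hx0, hx1⟩ := hx
      have hcont : Continuous (fun s : ℝ => x ^ s) := by
        simp only [Real.rpow_def_of_pos hx0]
        fun_prop
      have hIs : IntegrableOn (fun s => x ^ s) (Set.Ioc (n:ℝ) ((n:ℝ)+1)) := by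
        apply Measure.integrableOn_of_bounded (M := 1) hvolJ
          hcont.measurable.aestronglyMeasurable
        rw [ae_restrict_iff' measurableSet_Ioc]
        filter_upwards with s hs
        rw [Real.norm_eq_abs, abs_of_nonneg (Real.rpow_nonneg hx0.le s)]
        exact Real.rpow_le_one hx0.le hx1.le (hsJ s hs).le
      have hnns : 0 ≤ᵐ[volume.restrict (Set.Ioc (n:ℝ) ((n:ℝ)+1))] fun s => x ^ s :=
        Filter.Eventually.of_forall fun s => Real.rpow_nonneg hx0.le s
      have hval : ∫ s in Set.Ioc (n:ℝ) ((n:ℝ)+1), x ^ s = φ x := by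
        rw [← intervalIntegral.integral_of_le (by linarith : (n:ℝ) ≤ (n:ℝ)+1)]
        have := sint x hx0 hx1 n
        push_cast at this
        rw [this, hφ]
        congr 1
        rw [← Real.rpow_natCast x (n+1), ← Real.rpow_natCast x n]
        push_cast
        ring_nf
      calc ENNReal.ofReal (φ x) = ENNReal.ofReal (∫ s in Set.Ioc (n:ℝ) ((n:ℝ)+1), x ^ s) := by
            rw [hval]
        _ = ∫⁻ s in Set.Ioc (n:ℝ) ((n:ℝ)+1), ENNReal.ofReal (x ^ s) :=
            ofReal_integral_eq_lintegral_ofReal hIs hnns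
        _ = ∫⁻ s in Set.Ioc (n:ℝ) ((n:ℝ)+1), ENNReal.ofReal (Real.exp (Real.log x * s)) := by
            apply lintegral_congr
            intro s
            rw [Real.rpow_def_of_pos hx0]
    have hF : Measurable (fun p : ℝ × ℝ => ENNReal.ofReal (Real.exp (Real.log p.1 * p.2))) := by
      apply Measurable.ennreal_ofReal
      exact (Real.measurable_exp.comp ((Real.measurable_log.comp measurable_fst).mul
        measurable_snd))
    have step2 : ∫⁻ x in Set.Ioo (0:ℝ) 1, ∫⁻ s in Set.Ioc (n:ℝ) ((n:ℝ)+1),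
          ENNReal.ofReal (Real.exp (Real.log x * s))
        = ∫⁻ s in Set.Ioc (n:ℝ) ((n:ℝ)+1), ∫⁻ x in Set.Ioo (0:ℝ) 1,
          ENNReal.ofReal (Real.exp (Real.log x * s)) :=
      lintegral_lintegral_swap hF.aemeasurable
    have step3 : ∫⁻ s in Set.Ioc (n:ℝ) ((n:ℝ)+1), ∫⁻ x in Set.Ioo (0:ℝ) 1,
          ENNReal.ofReal (Real.exp (Real.log x * s))
        = ∫⁻ s in Set.Ioc (n:ℝ) ((n:ℝ)+1), ENNReal.ofReal (1/(s+1)) := by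
      apply setLIntegral_congr_fun measurableSet_Ioc
      intro s hs
      have hs0 : (0:ℝ) < s := hsJ s hs
      have hcs : Continuous (fun x : ℝ => x ^ s) := Real.continuous_rpow_const hs0.le
      have hIx : IntegrableOn (fun x => x ^ s) (Set.Ioo (0:ℝ) 1) := by
        apply Measure.integrableOn_of_bounded (M := 1) hvol
          hcs.measurable.aestronglyMeasurable
        rw [ae_restrict_iff' measurableSet_Ioo]
        filter_upwards with x hx
        rw [Real.norm_eq_abs, abs_of_nonneg (Real.rpow_nonneg hx.1.le s)]
        exact Real.rpow_le_one hx.1.le hx.2.le hs0.le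
      have hnnx : 0 ≤ᵐ[volume.restrict (Set.Ioo (0:ℝ) 1)] fun x => x ^ s := by
        rw [Filter.EventuallyLE, ae_restrict_iff' measurableSet_Ioo]
        filter_upwards with x hx using Real.rpow_nonneg hx.1.le s
      have hval : ∫ x in Set.Ioo (0:ℝ) 1, x ^ s = 1/(s+1) := by
        rw [← integral_Ioc_eq_integral_Ioo,
          ← intervalIntegral.integral_of_le (by norm_num : (0:ℝ) ≤ 1)]
        exact rint s hs0
      calc ∫⁻ x in Set.Ioo (0:ℝ) 1, ENNReal.ofReal (Real.exp (Real.log x * s))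
          = ∫⁻ x in Set.Ioo (0:ℝ) 1, ENNReal.ofReal (x ^ s) := by
            apply setLIntegral_congr_fun measurableSet_Ioo
            intro x hx
            beta_reduce
            rw [Real.rpow_def_of_pos hx.1]
        _ = ENNReal.ofReal (∫ x in Set.Ioo (0:ℝ) 1, x ^ s) :=
            (ofReal_integral_eq_lintegral_ofReal hIx hnnx).symm
        _ = ENNReal.ofReal (1/(s+1)) := by rw [hval]
    have step4 : ∫⁻ s in Set.Ioc (n:ℝ) ((n:ℝ)+1), ENNReal.ofReal (1/(s+1))
        = ENNReal.ofReal (Real.log ((n:ℝ)+2) - Real.log ((n:ℝ)+1)) := by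
      have hIo : IntegrableOn (fun s : ℝ => 1/(s+1)) (Set.Ioc (n:ℝ) ((n:ℝ)+1)) := by
        apply Measure.integrableOn_of_bounded (M := 1) hvolJ
          (measurable_const.div (measurable_id.add_const 1)).aestronglyMeasurable
        rw [ae_restrict_iff' measurableSet_Ioc]
        filter_upwards with s hs
        have hs0 : (0:ℝ) < s := hsJ s hs
        simp only [id_eq, Pi.div_apply]
        rw [Real.norm_eq_abs, abs_of_nonneg (by positivity)]
        rw [div_le_one (by linarith)]
        linarith
      have hnno : 0 ≤ᵐ[volume.restrict (Set.Ioc (n:ℝ) ((n:ℝ)+1))] fun s : ℝ => 1/(s+1) := by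
        rw [Filter.EventuallyLE, ae_restrict_iff' measurableSet_Ioc]
        filter_upwards with s hs
        have hs0 : (0:ℝ) < s := hsJ s hs
        positivity
      rw [← ofReal_integral_eq_lintegral_ofReal hIo hnno]
      congr 1
      rw [← intervalIntegral.integral_of_le (by linarith : (n:ℝ) ≤ (n:ℝ)+1)]
      exact oint n
    rw [step1, step2, step3, step4]
  have heq := ofReal_integral_eq_lintegral_ofReal hint hnn
  rw [key] at heq
  have h1 : 0 ≤ ∫ x in Set.Ioo (0:ℝ) 1, φ x :=
    setIntegral_nonneg measurableSet_Ioo (fun x hx => (phi_bound hx.1 hx.2 n).1)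
  have h2 : 0 ≤ Real.log ((n:ℝ)+2) - Real.log ((n:ℝ)+1) := by
    have := Real.log_le_log (by positivity : (0:ℝ) < (n:ℝ)+1)
      (show ((n:ℝ)+1) ≤ (n:ℝ)+2 by linarith)
    linarith
  exact (ENNReal.ofReal_eq_ofReal_iff h1 h2).1 heq

lemma hsum {x : ℝ} (hx0 : 0 < x) (hx1 : x < 1) :
    HasSum (fun n : ℕ => x ^ n - (x ^ (n+1) - x ^ n) / Real.log x)
      (1/(1-x) + 1/Real.log x) := by
  have hlog : Real.log x < 0 := Real.log_neg hx0 hx1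
  have hg : HasSum (fun n : ℕ => x ^ n) (1-x)⁻¹ := hasSum_geometric_of_lt_one hx0.le hx1
  have hc : HasSum (fun n : ℕ => x ^ n * ((1-x)/(-Real.log x)))
      ((1-x)⁻¹ * ((1-x)/(-Real.log x))) := hg.mul_right _
  have key := hg.sub hc
  have h1 : (fun n : ℕ => x ^ n - x ^ n * ((1-x)/(-Real.log x)))
      = fun n : ℕ => x ^ n - (x ^ (n+1) - x ^ n) / Real.log x := by
    funext n; rw [phi_eq hx0 hx1]
  have h2 : (1-x)⁻¹ - (1-x)⁻¹ * ((1-x)/(-Real.log x)) = 1/(1-x) + 1/Real.log x := by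
    have hx1' : (1:ℝ) - x ≠ 0 := by linarith
    field_simp
    ring
  rw [h1, h2] at key
  exact key

lemma a_nonneg (n : ℕ) : 0 ≤ 1/((n:ℝ)+1) - (Real.log ((n:ℝ)+2) - Real.log ((n:ℝ)+1)) := by
  have h1 : (0:ℝ) < (n:ℝ)+1 := by positivity
  have h2 : Real.log (((n:ℝ)+2)/((n:ℝ)+1)) ≤ ((n:ℝ)+2)/((n:ℝ)+1) - 1 :=
    Real.log_le_sub_one_of_pos (by positivity)
  rw [Real.log_div (by positivity) (by positivity)] at h2
  have h3 : ((n:ℝ)+2)/((n:ℝ)+1) - 1 = 1/((n:ℝ)+1) := by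
    field_simp
    norm_num
  linarith [h3 ▸ h2]

lemma asum : HasSum (fun n : ℕ => 1/((n:ℝ)+1) - (Real.log ((n:ℝ)+2) - Real.log ((n:ℝ)+1)))
    Real.eulerMascheroniConstant := by
  rw [hasSum_iff_tendsto_nat_of_nonneg a_nonneg]
  have key : ∀ N : ℕ, ∑ n ∈ Finset.range N,
      (1/((n:ℝ)+1) - (Real.log ((n:ℝ)+2) - Real.log ((n:ℝ)+1)))
      = Real.eulerMascheroniSeq N := by
    intro N
    rw [Finset.sum_sub_distrib]
    have t1 : ∑ n ∈ Finset.range N, 1/((n:ℝ)+1) = (harmonic N : ℝ) := by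
      rw [harmonic]; push_cast
      simp [one_div]
    have t2 : ∑ n ∈ Finset.range N, (Real.log ((n:ℝ)+2) - Real.log ((n:ℝ)+1))
        = Real.log ((N:ℝ)+1) := by
      have h := Finset.sum_range_sub (f := fun k : ℕ => Real.log ((k:ℝ)+1)) N
      have e1 : ∑ n ∈ Finset.range N, (Real.log ((n:ℝ)+2) - Real.log ((n:ℝ)+1))
          = ∑ i ∈ Finset.range N, (Real.log (((i+1:ℕ):ℝ)+1) - Real.log ((i:ℝ)+1)) := by
        apply Finset.sum_congr rfl
        intro k _
        push_cast
        ring_nf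
      rw [e1, h]
      norm_num
    rw [t1, t2, Real.eulerMascheroniSeq]
  simp only [key]
  exact Real.tendsto_eulerMascheroniSeq

lemma h_bound {x : ℝ} (hx0 : 0 < x) (hx1 : x < 1) (n : ℕ) :
    0 ≤ x ^ n - (x ^ (n+1) - x ^ n) / Real.log x ∧
      x ^ n - (x ^ (n+1) - x ^ n) / Real.log x ≤ 1 := by
  have hlog : Real.log x < 0 := Real.log_neg hx0 hx1
  have hL : 1 - x ≤ -Real.log x := by
    have := Real.log_le_sub_one_of_pos hx0; linarith
  have hxn : (0:ℝ) ≤ x ^ n := by positivity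
  have hxn1 : x ^ n ≤ 1 := pow_le_one₀ hx0.le hx1.le
  have hratio : (1-x) / (-Real.log x) ≤ 1 := by
    rw [div_le_one (by linarith)]; exact hL
  have hratio0 : 0 ≤ (1-x) / (-Real.log x) := by
    apply div_nonneg <;> linarith
  have hφ := phi_bound hx0 hx1 n
  rw [phi_eq hx0 hx1]
  constructor
  · have : x ^ n * ((1-x)/(-Real.log x)) ≤ x ^ n * 1 :=
      mul_le_mul_of_nonneg_left hratio hxn
    linarith
  · nlinarith [mul_nonneg hxn hratio0]

lemma hn_int (n : ℕ) :
    IntegrableOn (fun x : ℝ => x ^ n - (x ^ (n+1) - x ^ n) / Real.log x) (Set.Ioo 0 1) ∧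
    ∫ x in Set.Ioo (0:ℝ) 1, (x ^ n - (x ^ (n+1) - x ^ n) / Real.log x)
      = 1/((n:ℝ)+1) - (Real.log ((n:ℝ)+2) - Real.log ((n:ℝ)+1)) := by
  have hvol : volume (Set.Ioo (0:ℝ) 1) ≠ ⊤ := by simp [Real.volume_Ioo]
  have hpow : IntegrableOn (fun x : ℝ => x ^ n) (Set.Ioo 0 1) := by
    apply Measure.integrableOn_of_bounded (M := 1) hvol
      (continuous_pow n).measurable.aestronglyMeasurable
    rw [ae_restrict_iff' measurableSet_Ioo]
    filter_upwards with x hx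
    rw [Real.norm_eq_abs, abs_of_nonneg (pow_nonneg hx.1.le n)]
    exact pow_le_one₀ hx.1.le hx.2.le
  have hpval : ∫ x in Set.Ioo (0:ℝ) 1, x ^ n = 1/((n:ℝ)+1) := by
    rw [← integral_Ioc_eq_integral_Ioo,
      ← intervalIntegral.integral_of_le (by norm_num : (0:ℝ) ≤ 1), integral_pow]
    simp
  refine ⟨hpow.sub (B1 n).1, ?_⟩
  rw [integral_sub hpow (B1 n).1, hpval, (B1 n).2]

lemma gInt : IntegrableOn (fun x : ℝ => 1/(1-x) + 1/Real.log x) (Set.Ioo 0 1) ∧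
    ∫ x in Set.Ioo (0:ℝ) 1, (1/(1-x) + 1/Real.log x) = Real.eulerMascheroniConstant := by
  have hvol : volume (Set.Ioo (0:ℝ) 1) ≠ ⊤ := by simp [Real.volume_Ioo]
  set g : ℝ → ℝ := fun x => 1/(1-x) + 1/Real.log x with hg
  set h : ℕ → ℝ → ℝ := fun n x => x ^ n - (x ^ (n+1) - x ^ n) / Real.log x with hh
  have hmeas : Measurable g := by
    apply Measurable.add
    · exact measurable_const.div (measurable_const.sub measurable_id)
    · exact measurable_const.div Real.measurable_log
  have hhmeas : ∀ n, Measurable (h n) := by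
    intro n
    apply Measurable.sub
    · exact (continuous_pow n).measurable
    · exact ((continuous_pow (n+1)).measurable.sub (continuous_pow n).measurable).div
        Real.measurable_log
  have hgnn : ∀ x ∈ Set.Ioo (0:ℝ) 1, 0 ≤ g x := by
    intro x hx
    have := hsum hx.1 hx.2
    exact this.nonneg fun n => (h_bound hx.1 hx.2 n).1
  have key : ∫⁻ x in Set.Ioo (0:ℝ) 1, ENNReal.ofReal (g x)
      = ENNReal.ofReal Real.eulerMascheroniConstant := by
    have step1 : ∫⁻ x in Set.Ioo (0:ℝ) 1, ENNReal.ofReal (g x)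
        = ∫⁻ x in Set.Ioo (0:ℝ) 1, ∑' n, ENNReal.ofReal (h n x) := by
      apply setLIntegral_congr_fun measurableSet_Ioo
      intro x hx
      have hs := hsum hx.1 hx.2
      beta_reduce
      rw [show g x = ∑' n, h n x from hs.tsum_eq.symm]
      exact ENNReal.ofReal_tsum_of_nonneg (fun n => (h_bound hx.1 hx.2 n).1) hs.summable
    have step2 : ∫⁻ x in Set.Ioo (0:ℝ) 1, ∑' n, ENNReal.ofReal (h n x)
        = ∑' n, ∫⁻ x in Set.Ioo (0:ℝ) 1, ENNReal.ofReal (h n x) :=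
      lintegral_tsum fun n => ((hhmeas n).ennreal_ofReal).aemeasurable
    have step3 : ∀ n : ℕ, ∫⁻ x in Set.Ioo (0:ℝ) 1, ENNReal.ofReal (h n x)
        = ENNReal.ofReal (1/((n:ℝ)+1) - (Real.log ((n:ℝ)+2) - Real.log ((n:ℝ)+1))) := by
      intro n
      have hnn : 0 ≤ᵐ[volume.restrict (Set.Ioo (0:ℝ) 1)] h n := by
        rw [Filter.EventuallyLE, ae_restrict_iff' measurableSet_Ioo]
        filter_upwards with x hx using (h_bound hx.1 hx.2 n).1
      rw [← ofReal_integral_eq_lintegral_ofReal (hn_int n).1 hnn, (hn_int n).2]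
    have step4 : ∑' n : ℕ, ENNReal.ofReal
          (1/((n:ℝ)+1) - (Real.log ((n:ℝ)+2) - Real.log ((n:ℝ)+1)))
        = ENNReal.ofReal Real.eulerMascheroniConstant := by
      rw [← ENNReal.ofReal_tsum_of_nonneg a_nonneg asum.summable, asum.tsum_eq]
    rw [step1, step2]
    simp only [step3]
    exact step4
  have hnnae : 0 ≤ᵐ[volume.restrict (Set.Ioo (0:ℝ) 1)] g := by
    rw [Filter.EventuallyLE, ae_restrict_iff' measurableSet_Ioo]
    filter_upwards with x hx using hgnn x hx
  have hfin : HasFiniteIntegral g (volume.restrict (Set.Ioo (0:ℝ) 1)) := by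
    rw [hasFiniteIntegral_iff_ofReal hnnae, key]
    exact ENNReal.ofReal_lt_top
  have hintg : IntegrableOn g (Set.Ioo (0:ℝ) 1) := ⟨hmeas.aestronglyMeasurable, hfin⟩
  refine ⟨hintg, ?_⟩
  rw [integral_eq_lintegral_of_nonneg_ae hnnae hmeas.aestronglyMeasurable, key,
    ENNReal.toReal_ofReal (by linarith [Real.one_half_lt_eulerMascheroniConstant])]

lemma tInt {x : ℝ} (hx0 : 0 < x) (hx1 : x < 1) :
    IntegrableOn (fun t : ℝ => t * (1-x) / ((1 - t*(1-x)) * Real.log x)) (Set.Ioo 0 1) ∧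
    ∫ t in Set.Ioo (0:ℝ) 1, t * (1-x) / ((1 - t*(1-x)) * Real.log x)
      = -(1/(1-x) + 1/Real.log x) := by
  have hlog : Real.log x < 0 := Real.log_neg hx0 hx1
  have ha : 0 < 1 - x := by linarith
  have ha1 : 1 - x < 1 := by linarith
  have hden : ∀ t ∈ Set.Icc (0:ℝ) 1, (1 - t*(1-x)) * Real.log x ≠ 0 := by
    intro t ht
    have h1 : 0 < 1 - t*(1-x) := by nlinarith [ht.1, ht.2]
    exact mul_ne_zero h1.ne' hlog.ne
  have hcont : ContinuousOn (fun t : ℝ => t * (1-x) / ((1 - t*(1-x)) * Real.log x))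
      (Set.Icc 0 1) := by
    apply ContinuousOn.div
    · fun_prop
    · fun_prop
    · exact hden
  have hint : IntegrableOn (fun t : ℝ => t * (1-x) / ((1 - t*(1-x)) * Real.log x))
      (Set.Ioo 0 1) :=
    (hcont.integrableOn_Icc).mono_set Set.Ioo_subset_Icc_self
  refine ⟨hint, ?_⟩
  have e1 : ∀ t : ℝ, t * (1-x) / ((1 - t*(1-x)) * Real.log x)
      = (t * (1-x) / (1 - t*(1-x))) / Real.log x := by
    intro t; rw [div_div]
  have e2 : ∫ t in Set.Ioo (0:ℝ) 1, t * (1-x) / ((1 - t*(1-x)) * Real.log x)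
      = (∫ t in (0:ℝ)..1, t * (1-x) / (1 - t*(1-x))) / Real.log x := by
    rw [← integral_Ioc_eq_integral_Ioo,
      ← intervalIntegral.integral_of_le (by norm_num : (0:ℝ) ≤ 1)]
    simp_rw [e1]
    rw [intervalIntegral.integral_div]
  rw [e2, tint (1-x) ha ha1]
  have hl := hlog.ne
  have ha' := ha.ne'
  rw [show (1:ℝ) - (1-x) = x by ring, div_eq_iff hl]
  field_simp
  ring

/-- ∫_0^1 ∫_0^1 t(1−x)/((1−t(1−x))·ln x) dt dx converges and equals −γ. -/
theorem stmt_15 :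
    IntegrableOn
        (fun p : ℝ × ℝ => p.1 * (1 - p.2) / ((1 - p.1 * (1 - p.2)) * Real.log p.2))
        (Set.Ioo 0 1 ×ˢ Set.Ioo 0 1) ∧
      ∫ p in (Set.Ioo (0:ℝ) 1 ×ˢ Set.Ioo (0:ℝ) 1),
          p.1 * (1 - p.2) / ((1 - p.1 * (1 - p.2)) * Real.log p.2) =
        -Real.eulerMascheroniConstant := by
  set F : ℝ × ℝ → ℝ := fun p => p.1 * (1 - p.2) / ((1 - p.1 * (1 - p.2)) * Real.log p.2)
    with hFdef
  set g : ℝ → ℝ := fun x => 1/(1-x) + 1/Real.log x with hgdef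
  have hFmeas : Measurable F := by
    apply Measurable.div
    · exact measurable_fst.mul (measurable_const.sub measurable_snd)
    · exact (measurable_const.sub (measurable_fst.mul
        (measurable_const.sub measurable_snd))).mul
        (Real.measurable_log.comp measurable_snd)
  have hprod : (volume : Measure (ℝ × ℝ)).restrict (Set.Ioo 0 1 ×ˢ Set.Ioo 0 1)
      = (volume.restrict (Set.Ioo (0:ℝ) 1)).prod (volume.restrict (Set.Ioo (0:ℝ) 1)) := by
    rw [MeasureTheory.Measure.volume_eq_prod, Measure.prod_restrict]
  have hgnn_ae : 0 ≤ᵐ[volume.restrict (Set.Ioo (0:ℝ) 1)] g := by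
    rw [Filter.EventuallyLE, ae_restrict_iff' measurableSet_Ioo]
    filter_upwards with x hx
    exact (hsum hx.1 hx.2).nonneg fun n => (h_bound hx.1 hx.2 n).1
  have gLint : ∫⁻ x in Set.Ioo (0:ℝ) 1, ENNReal.ofReal (g x)
      = ENNReal.ofReal Real.eulerMascheroniConstant := by
    rw [← ofReal_integral_eq_lintegral_ofReal gInt.1 hgnn_ae, gInt.2]
  have hFle : ∀ p : ℝ × ℝ, p ∈ (Set.Ioo (0:ℝ) 1 ×ˢ Set.Ioo (0:ℝ) 1) → F p ≤ 0 := by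
    rintro ⟨t, x⟩ ⟨ht, hx⟩
    have hnum : 0 ≤ t * (1 - x) := by nlinarith [ht.1.le, hx.2.le]
    have hd1 : 0 < 1 - t * (1 - x) := by nlinarith [ht.1, ht.2, hx.1, hx.2]
    have hlog : Real.log x < 0 := Real.log_neg hx.1 hx.2
    have hden : (1 - t * (1 - x)) * Real.log x < 0 := mul_neg_of_pos_of_neg hd1 hlog
    exact div_nonpos_of_nonneg_of_nonpos hnum hden.le
  have inner : ∀ x ∈ Set.Ioo (0:ℝ) 1,
      ∫⁻ t in Set.Ioo (0:ℝ) 1, ENNReal.ofReal (-F (t, x)) = ENNReal.ofReal (g x) := by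
    intro x hx
    have hti := tInt hx.1 hx.2
    have hnnt : 0 ≤ᵐ[volume.restrict (Set.Ioo (0:ℝ) 1)] fun t => -F (t, x) := by
      rw [Filter.EventuallyLE, ae_restrict_iff' measurableSet_Ioo]
      filter_upwards with t ht
      have := hFle (t, x) ⟨ht, hx⟩
      simpa using this
    have hval : ∫ t in Set.Ioo (0:ℝ) 1, -F (t, x) = g x := by
      have h2 : ∫ t in Set.Ioo (0:ℝ) 1, F (t, x) = -(g x) := hti.2
      rw [MeasureTheory.integral_neg, h2, neg_neg]
    rw [← hval]
    exact (ofReal_integral_eq_lintegral_ofReal hti.1.neg hnnt).symm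
  have key : ∫⁻ p in (Set.Ioo (0:ℝ) 1 ×ˢ Set.Ioo (0:ℝ) 1), ENNReal.ofReal (-F p)
      = ENNReal.ofReal Real.eulerMascheroniConstant := by
    rw [hprod, lintegral_prod_symm (fun p => ENNReal.ofReal (-F p)) (by exact (hFmeas.neg.ennreal_ofReal).aemeasurable)]
    rw [← gLint]
    apply setLIntegral_congr_fun measurableSet_Ioo
    intro x hx
    exact inner x hx
  have hFi : IntegrableOn F (Set.Ioo (0:ℝ) 1 ×ˢ Set.Ioo (0:ℝ) 1) := by
    refine ⟨hFmeas.aestronglyMeasurable, ?_⟩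
    rw [hasFiniteIntegral_iff_norm]
    have hcongr : ∫⁻ p in (Set.Ioo (0:ℝ) 1 ×ˢ Set.Ioo (0:ℝ) 1),
        ENNReal.ofReal ‖F p‖
        = ∫⁻ p in (Set.Ioo (0:ℝ) 1 ×ˢ Set.Ioo (0:ℝ) 1), ENNReal.ofReal (-F p) := by
      apply setLIntegral_congr_fun (measurableSet_Ioo.prod measurableSet_Ioo)
      intro p hp
      beta_reduce
      rw [Real.norm_eq_abs, abs_of_nonpos (hFle p hp)]
    rw [hcongr, key]
    exact ENNReal.ofReal_lt_top
  refine ⟨hFi, ?_⟩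
  have hFi' : Integrable F
      ((volume.restrict (Set.Ioo (0:ℝ) 1)).prod (volume.restrict (Set.Ioo (0:ℝ) 1))) := by
    rw [← hprod]; exact hFi
  calc ∫ p in (Set.Ioo (0:ℝ) 1 ×ˢ Set.Ioo (0:ℝ) 1), F p
      = ∫ p, F p ∂((volume.restrict (Set.Ioo (0:ℝ) 1)).prod
          (volume.restrict (Set.Ioo (0:ℝ) 1))) := by rw [← hprod]
    _ = ∫ x in Set.Ioo (0:ℝ) 1, ∫ t in Set.Ioo (0:ℝ) 1, F (t, x) :=
        MeasureTheory.integral_prod_symm F hFi'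
    _ = ∫ x in Set.Ioo (0:ℝ) 1, -(g x) := by
        apply setIntegral_congr_fun measurableSet_Ioo
        intro x hx
        exact (tInt hx.1 hx.2).2
    _ = -Real.eulerMascheroniConstant := by rw [MeasureTheory.integral_neg, gInt.2]
end

section
/- The double integral ∫_0^1 ∫_0^1 (1−x)/((1−t·(1−x))·ln x) dx dt converges and equals −1; equivalently, 1 = −∫_0^1 ∫_0^1 (1−x)/((1−t(1−x))·ln x) dx dt. -/
open MeasureTheory Real

private lemma stmt16_denom_pos {x t : ℝ} (hx : x ∈ Set.Ioo (0:ℝ) 1)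
    (ht : t ∈ Set.Icc (0:ℝ) 1) : 0 < 1 - t * (1 - x) := by
  obtain ⟨hx0, hx1⟩ := hx; obtain ⟨ht0, ht1⟩ := ht; nlinarith

private lemma stmt16_inner {x : ℝ} (hx : x ∈ Set.Ioo (0:ℝ) 1) :
    ∫ t in (0:ℝ)..1, (1 - x) / ((1 - t * (1 - x)) * Real.log x) = -1 := by
  have hlog : Real.log x < 0 := Real.log_neg hx.1 hx.2
  have h := intervalIntegral.integral_eq_sub_of_hasDerivAt
    (f := fun t : ℝ => - Real.log (1 - t * (1 - x)) / Real.log x)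
    (f' := fun t : ℝ => (1 - x) / ((1 - t * (1 - x)) * Real.log x))
    (a := 0) (b := 1)
    (fun t ht => by
      rw [Set.uIcc_of_le zero_le_one] at ht
      have hd := stmt16_denom_pos hx ht
      have h1 : HasDerivAt (fun t : ℝ => 1 - t * (1 - x)) (-(1 - x)) t := by
        simpa using ((hasDerivAt_mul_const (1 - x)).const_sub 1 (x := t))
      have h2 := ((Real.hasDerivAt_log hd.ne').comp t h1).neg.div_const (Real.log x)
      convert h2 using 1
      · rfl
      · rfl
      · field_simp)
    (by
      apply ContinuousOn.intervalIntegrable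
      rw [Set.uIcc_of_le zero_le_one]
      apply ContinuousOn.div continuousOn_const
      · fun_prop
      · intro t ht
        exact mul_ne_zero (stmt16_denom_pos hx ht).ne' hlog.ne)
  rw [h]
  simp only [one_mul, zero_mul, sub_zero, mul_one]
  rw [Real.log_one]
  have : (1 : ℝ) - (1 - x) = x := by ring
  rw [this, neg_div, div_self hlog.ne]
  norm_num

private lemma stmt16_inner_Ioo {x : ℝ} (hx : x ∈ Set.Ioo (0:ℝ) 1) :
    ∫ t in Set.Ioo (0:ℝ) 1, (1 - x) / ((1 - t * (1 - x)) * Real.log x) = -1 := by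
  rw [← MeasureTheory.integral_Ioc_eq_integral_Ioo,
    ← intervalIntegral.integral_of_le zero_le_one]
  exact stmt16_inner hx

private lemma stmt16_inner_integrable {x : ℝ} (hx : x ∈ Set.Ioo (0:ℝ) 1) :
    IntegrableOn (fun t : ℝ => (1 - x) / ((1 - t * (1 - x)) * Real.log x))
      (Set.Ioo 0 1) := by
  have hlog : Real.log x < 0 := Real.log_neg hx.1 hx.2
  have hc : ContinuousOn (fun t : ℝ => (1 - x) / ((1 - t * (1 - x)) * Real.log x))
      (Set.Icc 0 1) := by
    apply ContinuousOn.div continuousOn_const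
    · fun_prop
    · intro t ht
      exact mul_ne_zero (stmt16_denom_pos hx ht).ne' hlog.ne
  exact (hc.integrableOn_Icc).mono_set Set.Ioo_subset_Icc_self

private lemma stmt16_neg {x t : ℝ} (hx : x ∈ Set.Ioo (0:ℝ) 1)
    (ht : t ∈ Set.Icc (0:ℝ) 1) :
    (1 - x) / ((1 - t * (1 - x)) * Real.log x) < 0 := by
  have hlog : Real.log x < 0 := Real.log_neg hx.1 hx.2
  exact div_neg_of_pos_of_neg (by linarith [hx.2])
    (mul_neg_of_pos_of_neg (stmt16_denom_pos hx ht) hlog)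

private lemma stmt16_norm_int {x : ℝ} (hx : x ∈ Set.Ioo (0:ℝ) 1) :
    ∫ t in Set.Ioo (0:ℝ) 1, ‖(1 - x) / ((1 - t * (1 - x)) * Real.log x)‖ = 1 := by
  rw [MeasureTheory.setIntegral_congr_fun measurableSet_Ioo
    (g := fun t => -((1 - x) / ((1 - t * (1 - x)) * Real.log x)))
    (fun t ht => by
      rw [Real.norm_eq_abs, abs_of_neg (stmt16_neg hx (Set.Ioo_subset_Icc_self ht))])]
  rw [MeasureTheory.integral_neg, stmt16_inner_Ioo hx]
  norm_num

/-- ∫_0^1 ∫_0^1 (1−x)/((1−t(1−x))·ln x) dx dt converges and equals −1. -/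
theorem stmt_16 :
    IntegrableOn
        (fun p : ℝ × ℝ => (1 - p.2) / ((1 - p.1 * (1 - p.2)) * Real.log p.2))
        (Set.Ioo 0 1 ×ˢ Set.Ioo 0 1) ∧
      ∫ p in (Set.Ioo (0:ℝ) 1 ×ˢ Set.Ioo (0:ℝ) 1),
          (1 - p.2) / ((1 - p.1 * (1 - p.2)) * Real.log p.2) = -1 := by
  set f : ℝ × ℝ → ℝ := fun p => (1 - p.2) / ((1 - p.1 * (1 - p.2)) * Real.log p.2) with hf
  have hmeas : AEStronglyMeasurable f
      ((volume.restrict (Set.Ioo (0:ℝ) 1)).prod (volume.restrict (Set.Ioo (0:ℝ) 1))) := by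
    apply Measurable.aestronglyMeasurable
    apply Measurable.div
    · fun_prop
    · exact (measurable_const.sub (measurable_fst.mul
        (measurable_const.sub measurable_snd))).mul (Real.measurable_log.comp measurable_snd)
  have hint : Integrable f
      ((volume.restrict (Set.Ioo (0:ℝ) 1)).prod (volume.restrict (Set.Ioo (0:ℝ) 1))) := by
    rw [MeasureTheory.integrable_prod_iff' hmeas]
    constructor
    · filter_upwards [ae_restrict_mem measurableSet_Ioo] with x hx
      exact stmt16_inner_integrable hx
    · apply (integrable_const (1:ℝ)).congr
      filter_upwards [ae_restrict_mem measurableSet_Ioo] with x hx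
      exact (stmt16_norm_int hx).symm
  have hrw : (volume : Measure (ℝ × ℝ)).restrict (Set.Ioo 0 1 ×ˢ Set.Ioo 0 1)
      = (volume.restrict (Set.Ioo (0:ℝ) 1)).prod (volume.restrict (Set.Ioo (0:ℝ) 1)) := by
    rw [Measure.volume_eq_prod, Measure.prod_restrict]
  constructor
  · rw [IntegrableOn, hrw]; exact hint
  · rw [hrw, MeasureTheory.integral_prod_symm f hint]
    rw [MeasureTheory.setIntegral_congr_fun measurableSet_Ioo
      (g := fun _ => (-1 : ℝ)) (fun x hx => stmt16_inner_Ioo hx)]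
    simp [Real.volume_Ioo]
end

section
/- Euler's transformation of series: if (a_n)_{n≥1} is a sequence of complex numbers such that the series ∑_{n=1}^∞ (−1)^{n−1} a_n converges, then the series ∑_{n=0}^∞ (1/2^{n+1}) ∑_{k=0}^n (−1)^k · binom(n,k) · a_{k+1} converges and the two sums are equal. -/
open Filter Finset

private lemma toep (d : ℕ → ℝ) (hd : ∀ m, 0 ≤ d m) (hd0 : Tendsto d atTop (nhds 0)) :
    Tendsto (fun N => (∑ m ∈ Finset.range (N + 1), (N.choose m : ℝ) * d m) / 2 ^ N)
      atTop (nhds 0) := by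
  rw [Metric.tendsto_atTop]
  intro ε hε
  rw [Metric.tendsto_atTop] at hd0
  obtain ⟨M, hM⟩ := hd0 (ε / 2) (by linarith)
  set S : ℝ := ∑ m ∈ Finset.range M, d m with hS
  have hS0 : 0 ≤ S := Finset.sum_nonneg fun m _ => hd m
  have h2 : Tendsto (fun N : ℕ => (N : ℝ) ^ M * (1 / 2 : ℝ) ^ N * S) atTop (nhds 0) := by
    have := (tendsto_pow_const_mul_const_pow_of_lt_one (r := 1 / 2) M (by norm_num)
      (by norm_num)).mul_const S
    simpa using this
  rw [Metric.tendsto_atTop] at h2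
  obtain ⟨N1, hN1⟩ := h2 (ε / 2) (by linarith)
  refine ⟨max (max M N1) 1, fun N hN => ?_⟩
  have hNM : M ≤ N := le_trans (le_max_left M N1) (le_trans (le_max_left _ 1) hN)
  have hNN1 : N1 ≤ N := le_trans (le_max_right M N1) (le_trans (le_max_left _ 1) hN)
  have hN1' : 1 ≤ N := le_trans (le_max_right _ 1) hN
  have key : (∑ m ∈ Finset.range (N + 1), (N.choose m : ℝ) * d m)
      ≤ (N : ℝ) ^ M * S + ε / 2 * 2 ^ N := by
    rw [← Finset.sum_range_add_sum_Ico _ (by omega : M ≤ N + 1)]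
    refine add_le_add ?_ ?_
    · calc ∑ m ∈ Finset.range M, (N.choose m : ℝ) * d m
          ≤ ∑ m ∈ Finset.range M, (N : ℝ) ^ M * d m := by
            refine Finset.sum_le_sum fun m hm => ?_
            have h1 : N.choose m ≤ N ^ m := Nat.choose_le_pow N m
            have h2' : N ^ m ≤ N ^ M :=
              Nat.pow_le_pow_right hN1' (le_of_lt (Finset.mem_range.mp hm))
            have : (N.choose m : ℝ) ≤ (N : ℝ) ^ M := by exact_mod_cast le_trans h1 h2'
            exact mul_le_mul_of_nonneg_right this (hd m)
          _ = (N : ℝ) ^ M * S := by rw [hS, Finset.mul_sum]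
    · calc ∑ m ∈ Finset.Ico M (N + 1), (N.choose m : ℝ) * d m
          ≤ ∑ m ∈ Finset.Ico M (N + 1), (N.choose m : ℝ) * (ε / 2) := by
            refine Finset.sum_le_sum fun m hm => ?_
            have := hM m (Finset.mem_Ico.mp hm).1
            rw [Real.dist_eq, sub_zero, abs_of_nonneg (hd m)] at this
            exact mul_le_mul_of_nonneg_left this.le (by positivity)
          _ = (∑ m ∈ Finset.Ico M (N + 1), (N.choose m : ℝ)) * (ε / 2) := by
            rw [Finset.sum_mul]
          _ ≤ (2 : ℝ) ^ N * (ε / 2) := by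
            have hsub : ∑ m ∈ Finset.Ico M (N + 1), (N.choose m : ℝ)
                ≤ ∑ m ∈ Finset.range (N + 1), (N.choose m : ℝ) := by
              refine Finset.sum_le_sum_of_subset_of_nonneg ?_ (fun i _ _ => by positivity)
              intro x hx
              simp only [Finset.mem_Ico] at hx
              exact Finset.mem_range.mpr hx.2
            have h2N : ∑ m ∈ Finset.range (N + 1), (N.choose m : ℝ) = 2 ^ N := by
              exact_mod_cast congrArg (Nat.cast : ℕ → ℝ) (Nat.sum_range_choose N)
            rw [← h2N]
            exact mul_le_mul_of_nonneg_right hsub (by positivity)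
          _ = ε / 2 * 2 ^ N := by ring
  have hnn : 0 ≤ (∑ m ∈ Finset.range (N + 1), (N.choose m : ℝ) * d m) / 2 ^ N := by
    apply div_nonneg _ (by positivity)
    exact Finset.sum_nonneg fun m _ => mul_nonneg (by positivity) (hd m)
  rw [Real.dist_eq, sub_zero, abs_of_nonneg hnn]
  have hb := hN1 N hNN1
  rw [Real.dist_eq, sub_zero, abs_of_nonneg (by positivity)] at hb
  have h2pos : (0 : ℝ) < 2 ^ N := by positivity
  have h2ne : (2 : ℝ) ^ N ≠ 0 := ne_of_gt h2pos
  calc (∑ m ∈ Finset.range (N + 1), (N.choose m : ℝ) * d m) / 2 ^ N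
      ≤ ((N : ℝ) ^ M * S + ε / 2 * 2 ^ N) / 2 ^ N := by
        exact div_le_div_of_nonneg_right key h2pos.le
    _ = (N : ℝ) ^ M * (1 / 2 : ℝ) ^ N * S + ε / 2 := by
        rw [add_div, mul_div_cancel_right₀ _ h2ne, div_pow, one_pow]
        ring
    _ < ε / 2 + ε / 2 := by linarith
    _ = ε := by ring

/-- Euler's transformation of series: if ∑_{n=1}^∞ (−1)^{n−1} a_n converges to L,
then ∑_{n=0}^∞ (1/2^{n+1}) ∑_{k=0}^n (−1)^k C(n,k) a_{k+1} converges to L. -/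
theorem stmt_19 (a : ℕ → ℂ) (L : ℂ)
    (h : Tendsto (fun N : ℕ => ∑ n ∈ Finset.range N, (-1 : ℂ) ^ n * a (n + 1))
      atTop (nhds L)) :
    Tendsto (fun N : ℕ => ∑ n ∈ Finset.range N,
        (1 / 2 ^ (n + 1) : ℂ) * ∑ k ∈ Finset.range (n + 1),
          (-1 : ℂ) ^ k * (n.choose k : ℂ) * a (k + 1))
      atTop (nhds L) := by
  set s : ℕ → ℂ := fun m => ∑ k ∈ Finset.range m, (-1 : ℂ) ^ k * a (k + 1) with hs
  set b : ℕ → ℂ := fun n => ∑ k ∈ Finset.range (n + 1),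
      (-1 : ℂ) ^ k * (n.choose k : ℂ) * a (k + 1) with hbdef
  set F : ℕ → ℂ := fun N => ∑ m ∈ Finset.range (N + 1), (N.choose m : ℂ) * s m with hF
  have hs0 : s 0 = 0 := by simp [hs]
  have hstep : ∀ m, s (m + 1) = s m + (-1 : ℂ) ^ m * a (m + 1) := fun m => by
    simp [hs, Finset.sum_range_succ]
  have hFrec : ∀ N, F (N + 1) = 2 * F N + b N := by
    intro N
    have e1 : F (N + 1) = ∑ m ∈ Finset.range (N + 1),
        ((N.choose m : ℂ) + (N.choose (m + 1) : ℂ)) * s (m + 1) := by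
      simp only [hF]
      rw [Finset.sum_range_succ' (fun m => ((N + 1).choose m : ℂ) * s m) (N + 1)]
      simp only [Nat.choose_succ_succ, Nat.cast_add, hs0, mul_zero, add_zero]
      try exact Finset.sum_congr rfl fun m _ => by push_cast; ring
    have e2 : ∑ m ∈ Finset.range (N + 1), (N.choose (m + 1) : ℂ) * s (m + 1) = F N := by
      rw [Finset.sum_range_succ, Nat.choose_succ_self, Nat.cast_zero, zero_mul, add_zero]
      simp only [hF]
      rw [Finset.sum_range_succ' (fun m => (N.choose m : ℂ) * s m) N, hs0]
      simp
    have e3 : ∑ m ∈ Finset.range (N + 1), (N.choose m : ℂ) * s (m + 1) = F N + b N := by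
      simp only [hF, hbdef]
      rw [← Finset.sum_add_distrib]
      refine Finset.sum_congr rfl fun m _ => ?_
      rw [hstep m]; ring
    calc F (N + 1) = ∑ m ∈ Finset.range (N + 1), (N.choose m : ℂ) * s (m + 1)
          + ∑ m ∈ Finset.range (N + 1), (N.choose (m + 1) : ℂ) * s (m + 1) := by
          rw [e1, ← Finset.sum_add_distrib]
          exact Finset.sum_congr rfl fun m _ => by ring
      _ = 2 * F N + b N := by rw [e2, e3]; ring
  have hiden : ∀ N, ∑ n ∈ Finset.range N, (1 / 2 ^ (n + 1) : ℂ) * b n = F N / 2 ^ N := by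
    intro N
    induction N with
    | zero => simp [hF, hs0]
    | succ N ih =>
        rw [Finset.sum_range_succ, ih, hFrec N]
        have h2 : (2 : ℂ) ^ (N + 1) ≠ 0 := pow_ne_zero _ (by norm_num)
        have h2' : (2 : ℂ) ^ N ≠ 0 := pow_ne_zero _ (by norm_num)
        field_simp
        ring
  have hgoal : Tendsto (fun N => F N / 2 ^ N) atTop (nhds L) := by
    rw [tendsto_iff_norm_sub_tendsto_zero]
    have hdiff : ∀ N, F N / 2 ^ N - L
        = (∑ m ∈ Finset.range (N + 1), (N.choose m : ℂ) * (s m - L)) / 2 ^ N := by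
      intro N
      have h2 : (2 : ℂ) ^ N ≠ 0 := pow_ne_zero _ (by norm_num)
      have hsum : ∑ m ∈ Finset.range (N + 1), (N.choose m : ℂ) * (s m - L)
          = F N - 2 ^ N * L := by
        have hch : ∑ m ∈ Finset.range (N + 1), (N.choose m : ℂ) = 2 ^ N := by
          exact_mod_cast congrArg (Nat.cast : ℕ → ℂ) (Nat.sum_range_choose N)
        simp only [mul_sub, Finset.sum_sub_distrib, hF, ← Finset.sum_mul, hch]
      rw [hsum, sub_div, mul_div_cancel_left₀ _ h2]
    have hb : ∀ N, ‖F N / 2 ^ N - L‖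
        ≤ (∑ m ∈ Finset.range (N + 1), (N.choose m : ℝ) * ‖s m - L‖) / 2 ^ N := by
      intro N
      rw [hdiff N, norm_div]
      have h2 : ‖(2 : ℂ) ^ N‖ = (2 : ℝ) ^ N := by
        rw [norm_pow]; norm_num
      rw [h2]
      refine div_le_div_of_nonneg_right ?_ (by positivity) |>.trans_eq rfl
      refine le_trans (norm_sum_le _ _) (Finset.sum_le_sum fun m _ => ?_)
      have hc : ‖(N.choose m : ℂ)‖ = (N.choose m : ℝ) := by
        rw [Complex.norm_natCast]
      rw [norm_mul, hc]
    have hsd : Tendsto (fun m => ‖s m - L‖) atTop (nhds 0) := by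
      rw [← tendsto_iff_norm_sub_tendsto_zero]
      exact h
    have ht := toep (fun m => ‖s m - L‖) (fun m => norm_nonneg _) hsd
    refine squeeze_zero (fun N => norm_nonneg _) hb ht
  have heq : (fun N : ℕ => ∑ n ∈ Finset.range N, (1 / 2 ^ (n + 1) : ℂ) * b n)
      = fun N => F N / 2 ^ N := funext hiden
  show Tendsto (fun N : ℕ => ∑ n ∈ Finset.range N, (1 / 2 ^ (n + 1) : ℂ) * b n)
    atTop (nhds L)
  rw [heq]
  exact hgoal
end
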